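/- arXiv:0905.3098 — 7 statements merged into one kernel-verified Lean document; each statement's English description precedes it below -/
import Mathlib

section
/- Let (X,T) and (Y,S) be minimal topological dynamical systems on compact metric spaces, with (Y,S) distal. If X₁ is a nonempty T-invariant subset of X and Φ: X₁ → Y is continuous (with the induced topology) and satisfies Φ ∘ T = S ∘ Φ on X₁, then Φ extends to a continuous map Φ': X → Y with Φ' ∘ T = S ∘ Φ'. -/
open Filter Topology

/-- Extension of continuous equivariant maps from invariant subsets, when the target
system is minimal and distal. -/
theorem extend_equivariant_map
    {X Y : Type*} [MetricSpace X] [CompactSpace X] [MetricSpace Y] [CompactSpace Y]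
    (T : X ≃ₜ X) (S : Y ≃ₜ Y)
    (hXmin : ∀ x : X, Dense (Set.range fun n : ℤ => (T.toEquiv ^ n) x))
    (hYmin : ∀ y : Y, Dense (Set.range fun n : ℤ => (S.toEquiv ^ n) y))
    (hYdistal : ∀ y y' : Y, y ≠ y' →
      ∃ δ > 0, ∀ n : ℤ, δ ≤ dist ((S.toEquiv ^ n) y) ((S.toEquiv ^ n) y'))
    (X₁ : Set X) (hne : X₁.Nonempty) (hinv : T '' X₁ = X₁)
    (Φ : X → Y) (hcont : ContinuousOn Φ X₁)
    (hcomm : ∀ x ∈ X₁, Φ (T x) = S (Φ x)) :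
    ∃ Φ' : X → Y, Continuous Φ' ∧ (∀ x ∈ X₁, Φ' x = Φ x) ∧
      ∀ x : X, Φ' (T x) = S (Φ' x) := by
  obtain ⟨x₀, hx₀⟩ := hne
  -- basic application identities for integer powers
  have hTsucc : ∀ (n : ℤ) (x : X), (T.toEquiv ^ (n + 1)) x = T ((T.toEquiv ^ n) x) := by
    intro n x
    rw [show n + 1 = 1 + n by ring, zpow_add, Equiv.Perm.mul_apply]
    simp
  have hTpred : ∀ (n : ℤ) (x : X), (T.toEquiv ^ (n - 1)) x = T.symm ((T.toEquiv ^ n) x) := by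
    intro n x
    rw [show n - 1 = -1 + n by ring, zpow_add, Equiv.Perm.mul_apply]
    simp [Equiv.Perm.inv_def]
  have hSsucc : ∀ (n : ℤ) (y : Y), (S.toEquiv ^ (n + 1)) y = S ((S.toEquiv ^ n) y) := by
    intro n y
    rw [show n + 1 = 1 + n by ring, zpow_add, Equiv.Perm.mul_apply]
    simp
  have hSpred : ∀ (n : ℤ) (y : Y), (S.toEquiv ^ (n - 1)) y = S.symm ((S.toEquiv ^ n) y) := by
    intro n y
    rw [show n - 1 = -1 + n by ring, zpow_add, Equiv.Perm.mul_apply]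
    simp [Equiv.Perm.inv_def]
  -- one-step invariance
  have hT : ∀ x ∈ X₁, T x ∈ X₁ := fun x hx => hinv ▸ ⟨x, hx, rfl⟩
  have hTsymm : ∀ x ∈ X₁, T.symm x ∈ X₁ := by
    intro x hx
    rw [← hinv] at hx
    obtain ⟨a, ha, rfl⟩ := hx
    simpa using ha
  -- one-step commutation backwards
  have hcomm' : ∀ x ∈ X₁, Φ (T.symm x) = S.symm (Φ x) := by
    intro x hx
    have h := hcomm (T.symm x) (hTsymm x hx)
    rw [T.apply_symm_apply] at h
    rw [h]; simp
  -- invariance and commutation for all integer powers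
  have key : ∀ (n : ℤ), ∀ x ∈ X₁,
      (T.toEquiv ^ n) x ∈ X₁ ∧ Φ ((T.toEquiv ^ n) x) = (S.toEquiv ^ n) (Φ x) := by
    intro n
    induction n using Int.induction_on with
    | zero => intro x hx; simpa using hx
    | succ k ih =>
      intro x hx
      obtain ⟨hm, hc⟩ := ih x hx
      refine ⟨?_, ?_⟩
      · rw [hTsucc]; exact hT _ hm
      · rw [hTsucc, hSsucc, hcomm _ hm, hc]
    | pred k ih =>
      intro x hx
      obtain ⟨hm, hc⟩ := ih x hx
      have e1 : (-k : ℤ) - 1 = -k - 1 := rfl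
      refine ⟨?_, ?_⟩
      · rw [show ((-(k:ℤ) - 1)) = (-(k:ℤ)) - 1 by ring, hTpred]; exact hTsymm _ hm
      · rw [show ((-(k:ℤ) - 1)) = (-(k:ℤ)) - 1 by ring, hTpred, hSpred, hcomm' _ hm, hc]
  -- continuity of integer powers
  have hcf : ∀ n : ℤ, Continuous fun x : X => (T.toEquiv ^ n) x := by
    intro n
    induction n using Int.induction_on with
    | zero => simpa using continuous_id'
    | succ k ih => simpa only [hTsucc, Function.comp_def] using T.continuous.comp ih
    | pred k ih =>
      have := T.symm.continuous.comp ih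
      simpa only [show ∀ x : X, (T.toEquiv ^ (-(k:ℤ) - 1)) x = T.symm ((T.toEquiv ^ (-(k:ℤ))) x) from
        fun x => hTpred (-(k:ℤ)) x, Function.comp_def] using this
  have hcg : ∀ n : ℤ, Continuous fun y : Y => (S.toEquiv ^ n) y := by
    intro n
    induction n using Int.induction_on with
    | zero => simpa using continuous_id'
    | succ k ih => simpa only [hSsucc, Function.comp_def] using S.continuous.comp ih
    | pred k ih =>
      have := S.symm.continuous.comp ih
      simpa only [show ∀ y : Y, (S.toEquiv ^ (-(k:ℤ) - 1)) y = S.symm ((S.toEquiv ^ (-(k:ℤ))) y) from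
        fun y => hSpred (-(k:ℤ)) y, Function.comp_def] using this
  -- X₁ is dense
  have hdense : Dense X₁ := by
    refine Dense.mono ?_ (hXmin x₀)
    rintro _ ⟨n, rfl⟩
    exact (key n x₀ hx₀).1
  -- uniform continuity of Φ on X₁
  have hUC : ∀ ε > (0:ℝ), ∃ δ > (0:ℝ), ∀ a ∈ X₁, ∀ b ∈ X₁,
      dist a b < δ → dist (Φ a) (Φ b) < ε := by
    by_contra hnc
    push_neg at hnc
    obtain ⟨ε, hε, hseq⟩ := hnc
    choose a ha b hb hab hΦab using fun n : ℕ => hseq (1 / (n + 1)) (by positivity)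
    set U : Ultrafilter ℕ := Ultrafilter.of atTop with hUdef
    have hU : (U : Filter ℕ) ≤ atTop := Ultrafilter.of_le _
    obtain ⟨x, -, hx⟩ := isCompact_univ.ultrafilter_le_nhds (U.map a) (by simp)
    obtain ⟨y, -, hy⟩ := isCompact_univ.ultrafilter_le_nhds (U.map (fun n => Φ (a n))) (by simp)
    obtain ⟨y', -, hy'⟩ := isCompact_univ.ultrafilter_le_nhds (U.map (fun n => Φ (b n))) (by simp)
    have hxa : Tendsto a U (𝓝 x) := hx
    have hya : Tendsto (fun n => Φ (a n)) U (𝓝 y) := hy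
    have hyb : Tendsto (fun n => Φ (b n)) U (𝓝 y') := hy'
    -- b also tends to x
    have hxb : Tendsto b U (𝓝 x) := by
      rw [tendsto_iff_dist_tendsto_zero]
      have h1 : Tendsto (fun n : ℕ => 1 / ((n:ℝ) + 1) + dist (a n) x) U (𝓝 0) := by
        have t1 : Tendsto (fun n : ℕ => 1 / ((n:ℝ) + 1)) U (𝓝 0) :=
          (tendsto_one_div_add_atTop_nhds_zero_nat).mono_left hU
        have t2 : Tendsto (fun n => dist (a n) x) U (𝓝 0) :=
          tendsto_iff_dist_tendsto_zero.mp hxa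
        simpa using t1.add t2
      refine squeeze_zero (fun n => dist_nonneg) (fun n => ?_) h1
      calc dist (b n) x ≤ dist (b n) (a n) + dist (a n) x := dist_triangle _ _ _
        _ ≤ 1 / ((n:ℝ) + 1) + dist (a n) x := by
            have := hab n
            rw [dist_comm]
            linarith
    -- the limits are distinct
    have hyy' : y ≠ y' := by
      have hle : ε ≤ dist y y' := by
        have ht : Tendsto (fun n => dist (Φ (a n)) (Φ (b n))) U (𝓝 (dist y y')) :=
          hya.dist hyb
        exact ge_of_tendsto ht (Eventually.of_forall fun n => hΦab n)
      intro h
      rw [h] at hle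
      simp at hle
      linarith
    obtain ⟨δ, hδ, hdist⟩ := hYdistal y y' hyy'
    -- continuity of Φ at x₀ within X₁
    have hcx := hcont x₀ hx₀
    rw [Metric.continuousWithinAt_iff] at hcx
    obtain ⟨ρ, hρ, hball⟩ := hcx (δ / 4) (by positivity)
    -- minimality of X: move x close to x₀
    obtain ⟨m, hm⟩ : ∃ m : ℤ, dist ((T.toEquiv ^ m) x) x₀ < ρ / 2 := by
      have hd := hXmin x
      rw [Metric.dense_iff] at hd
      obtain ⟨z, hz1, hz2⟩ := hd x₀ (ρ / 2) (by positivity)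
      obtain ⟨m, rfl⟩ := hz2
      exact ⟨m, by simpa [dist_comm] using hz1⟩
    -- convergence of translated sequences
    have h1 : Tendsto (fun n => (T.toEquiv ^ m) (a n)) U (𝓝 ((T.toEquiv ^ m) x)) :=
      ((hcf m).tendsto x).comp hxa
    have h2 : Tendsto (fun n => (T.toEquiv ^ m) (b n)) U (𝓝 ((T.toEquiv ^ m) x)) :=
      ((hcf m).tendsto x).comp hxb
    have h3 : Tendsto (fun n => Φ ((T.toEquiv ^ m) (a n))) U (𝓝 ((S.toEquiv ^ m) y)) := by
      have : (fun n => Φ ((T.toEquiv ^ m) (a n))) = fun n => (S.toEquiv ^ m) (Φ (a n)) := by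
        funext n; exact (key m (a n) (ha n)).2
      rw [this]
      exact ((hcg m).tendsto y).comp hya
    have h4 : Tendsto (fun n => Φ ((T.toEquiv ^ m) (b n))) U (𝓝 ((S.toEquiv ^ m) y')) := by
      have : (fun n => Φ ((T.toEquiv ^ m) (b n))) = fun n => (S.toEquiv ^ m) (Φ (b n)) := by
        funext n; exact (key m (b n) (hb n)).2
      rw [this]
      exact ((hcg m).tendsto y').comp hyb
    have e1 := Metric.tendsto_nhds.mp h1 (ρ / 2) (by positivity)
    have e2 := Metric.tendsto_nhds.mp h2 (ρ / 2) (by positivity)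
    have e3 := Metric.tendsto_nhds.mp h3 (δ / 4) (by positivity)
    have e4 := Metric.tendsto_nhds.mp h4 (δ / 4) (by positivity)
    obtain ⟨n, ⟨⟨hn1, hn2⟩, hn3⟩, hn4⟩ := (((e1.and e2).and e3).and e4).exists
    set u := (T.toEquiv ^ m) (a n) with hu
    set u' := (T.toEquiv ^ m) (b n) with hu'
    have hu1 : u ∈ X₁ := (key m (a n) (ha n)).1
    have hu'1 : u' ∈ X₁ := (key m (b n) (hb n)).1
    have hud : dist u x₀ < ρ := by
      calc dist u x₀ ≤ dist u ((T.toEquiv ^ m) x) + dist ((T.toEquiv ^ m) x) x₀ :=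
            dist_triangle _ _ _
        _ < ρ / 2 + ρ / 2 := by exact add_lt_add hn1 hm
        _ = ρ := by ring
    have hu'd : dist u' x₀ < ρ := by
      calc dist u' x₀ ≤ dist u' ((T.toEquiv ^ m) x) + dist ((T.toEquiv ^ m) x) x₀ :=
            dist_triangle _ _ _
        _ < ρ / 2 + ρ / 2 := by exact add_lt_add hn2 hm
        _ = ρ := by ring
    have hΦu : dist (Φ u) (Φ x₀) < δ / 4 := hball hu1 hud
    have hΦu' : dist (Φ u') (Φ x₀) < δ / 4 := hball hu'1 hu'd
    have hΦuu' : dist (Φ u) (Φ u') < δ / 2 := by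
      calc dist (Φ u) (Φ u') ≤ dist (Φ u) (Φ x₀) + dist (Φ x₀) (Φ u') := dist_triangle _ _ _
        _ < δ / 4 + δ / 4 := by rw [dist_comm (Φ x₀)]; exact add_lt_add hΦu hΦu'
        _ = δ / 2 := by ring
    have : dist ((S.toEquiv ^ m) y) ((S.toEquiv ^ m) y') < δ := by
      calc dist ((S.toEquiv ^ m) y) ((S.toEquiv ^ m) y')
          ≤ dist ((S.toEquiv ^ m) y) (Φ u) + dist (Φ u) (Φ u') + dist (Φ u') ((S.toEquiv ^ m) y') :=
            dist_triangle4 _ _ _ _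
        _ < δ / 4 + δ / 2 + δ / 4 := by
            rw [dist_comm ((S.toEquiv ^ m) y) (Φ u)]
            exact add_lt_add (add_lt_add hn3 hΦuu') hn4
        _ = δ := by ring
    exact absurd (hdist m) (not_le.mpr this)
  -- now extend by uniform continuity
  have hdr : DenseRange (Subtype.val : X₁ → X) := hdense.denseRange_val
  have hui : IsUniformInducing (Subtype.val : X₁ → X) :=
    isUniformEmbedding_subtype_val.toIsUniformInducing
  set ψ : X₁ → Y := fun p => Φ p with hψ
  have hψc : Continuous ψ := hcont.restrict
  have hψu : UniformContinuous ψ := by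
    rw [Metric.uniformContinuous_iff]
    intro ε hε
    obtain ⟨δ, hδ, h⟩ := hUC ε hε
    exact ⟨δ, hδ, fun p q hpq => h p p.2 q q.2 (by rwa [← Subtype.dist_eq])⟩
  have hΦ'u : UniformContinuous ((hui.isDenseInducing hdr).extend ψ) :=
    uniformContinuous_uniformly_extend hui hdr hψu
  set Φ' : X → Y := (hui.isDenseInducing hdr).extend ψ with hΦ'
  have heq : ∀ x ∈ X₁, Φ' x = Φ x := fun x hx =>
    (hui.isDenseInducing hdr).extend_eq hψc ⟨x, hx⟩
  refine ⟨Φ', hΦ'u.continuous, heq, ?_⟩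
  have hfun : (fun x => Φ' (T x)) = fun x => S (Φ' x) := by
    refine Continuous.ext_on hdense (hΦ'u.continuous.comp T.continuous)
      (S.continuous.comp hΦ'u.continuous) ?_
    intro x hx
    show Φ' (T x) = S (Φ' x)
    have h1 : Φ' (T x) = Φ (T x) := heq _ (hT x hx)
    rw [h1, hcomm x hx, heq x hx]
  exact fun x => congrFun hfun x
end

section
/- Let (X,T) be a topological dynamical system, d ≥ 1, and x,y ∈ X proximal points such that the closed orbit of y is a minimal set. Then the point (x, y, y, …, y) ∈ X^{2^d} (with x in the coordinate indexed by the empty set and y in all other coordinates) belongs to Q^[d](X), the closure in X^{2^d} of the set { (T^{n·ε} x : ε ∈ {0,1}^d) : x ∈ X, n ∈ ℤ^d }, where n·ε = Σᵢ nᵢεᵢ. -/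
open Filter Topology

noncomputable section

def dotP {d : ℕ} (n : Fin d → ℤ) (ε : Fin d → Bool) : ℤ :=
  ∑ i, if ε i then n i else 0

def vertex0 (d : ℕ) : Fin d → Bool := fun _ => false

def cubeQ (X : Type*) [TopologicalSpace X] (T : X ≃ₜ X) (d : ℕ) :
    Set ((Fin d → Bool) → X) :=
  closure {y | ∃ (x : X) (n : Fin d → ℤ), y = fun ε => (T.toEquiv ^ dotP n ε) x}

lemma dotP_vertex0 {d : ℕ} (n : Fin d → ℤ) : dotP n (vertex0 d) = 0 := by
  simp [dotP, vertex0]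

lemma dotP_cons {d : ℕ} (j : ℤ) (n : Fin d → ℤ) (ε : Fin (d+1) → Bool) :
    dotP (Fin.cons j n) ε = (if ε 0 then j else 0) + dotP n (fun i => ε i.succ) := by
  simp [dotP, Fin.sum_univ_succ]

lemma cont_zpow {X : Type*} [TopologicalSpace X] (T : X ≃ₜ X) (j : ℤ) :
    Continuous fun a => (T.toEquiv ^ j) a := by
  induction j using Int.induction_on with
  | zero => simpa using continuous_id'
  | succ n ih =>
      have : ∀ a, (T.toEquiv ^ ((n:ℤ)+1)) a = (T.toEquiv ^ (n:ℤ)) (T a) := by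
        intro a; rw [zpow_add_one]; rfl
      simp only [this]; exact ih.comp T.continuous
  | pred n ih =>
      have : ∀ a, (T.toEquiv ^ (-(n:ℤ)-1)) a = (T.toEquiv ^ (-(n:ℤ))) (T.symm a) := by
        intro a; rw [zpow_sub_one]; rfl
      simp only [this]; exact ih.comp T.symm.continuous

lemma zpow_add_apply {X : Type*} [TopologicalSpace X] (T : X ≃ₜ X) (j k : ℤ) (a : X) :
    (T.toEquiv ^ (j + k)) a = (T.toEquiv ^ j) ((T.toEquiv ^ k) a) := by
  rw [zpow_add]; rfl

lemma key_lemma {X : Type*} [MetricSpace X] [CompactSpace X] (T : X ≃ₜ X)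
    (x y : X)
    (hprox : ∀ δ > 0, ∀ N : ℕ, ∃ n : ℕ, N ≤ n ∧
      dist ((T.toEquiv ^ (n : ℤ)) x) ((T.toEquiv ^ (n : ℤ)) y) < δ)
    (hmin : ∀ z ∈ closure (Set.range fun n : ℤ => (T.toEquiv ^ n) y),
      closure (Set.range fun n : ℤ => (T.toEquiv ^ n) y) ⊆
        closure (Set.range fun n : ℤ => (T.toEquiv ^ n) z))
    {δ : ℝ} (hδ : 0 < δ) :
    ∃ n : ℤ, dist ((T.toEquiv ^ n) x) y < δ ∧ dist ((T.toEquiv ^ n) y) y < δ := by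
  set Z := closure (Set.range fun n : ℤ => (T.toEquiv ^ n) y) with hZ
  have hyZ : y ∈ Z := subset_closure ⟨0, by simp⟩
  have hZcomp : IsCompact Z := isClosed_closure.isCompact
  set U : ℤ → Set X := fun j => (fun a => (T.toEquiv ^ j) a) ⁻¹' Metric.ball y δ with hU
  have hUopen : ∀ j, IsOpen (U j) := fun j => (Metric.isOpen_ball).preimage (cont_zpow T j)
  have hcover : Z ⊆ ⋃ j, U j := by
    intro z hz
    have hyc : y ∈ closure (Set.range fun n : ℤ => (T.toEquiv ^ n) z) := hmin z hz hyZ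
    rw [Metric.mem_closure_iff] at hyc
    obtain ⟨b, ⟨j, rfl⟩, hb⟩ := hyc δ hδ
    exact Set.mem_iUnion.2 ⟨j, by simpa [U, Metric.mem_ball, dist_comm] using hb⟩
  obtain ⟨η, hη, hball⟩ := lebesgue_number_lemma_of_metric hZcomp hUopen hcover
  obtain ⟨m, -, hm⟩ := hprox η hη 0
  have hzZ : (T.toEquiv ^ (m:ℤ)) y ∈ Z := subset_closure ⟨m, rfl⟩
  obtain ⟨j, hj⟩ := hball _ hzZ
  refine ⟨j + m, ?_, ?_⟩
  · have hx : (T.toEquiv ^ (m:ℤ)) x ∈ U j := hj (by simpa [Metric.mem_ball, dist_comm] using hm)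
    have : (T.toEquiv ^ (j + (m:ℤ))) x = (T.toEquiv ^ j) ((T.toEquiv ^ (m:ℤ)) x) := by
      rw [zpow_add]; rfl
    rw [this]; exact hx
  · have hy : (T.toEquiv ^ (m:ℤ)) y ∈ U j := hj (Metric.mem_ball_self hη)
    have : (T.toEquiv ^ (j + (m:ℤ))) y = (T.toEquiv ^ j) ((T.toEquiv ^ (m:ℤ)) y) := by
      rw [zpow_add]; rfl
    rw [this]; exact hy


lemma multi_lemma {X : Type*} [MetricSpace X] [CompactSpace X] (T : X ≃ₜ X)
    (x y : X)
    (key : ∀ δ : ℝ, 0 < δ →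
      ∃ n : ℤ, dist ((T.toEquiv ^ n) x) y < δ ∧ dist ((T.toEquiv ^ n) y) y < δ)
    (d : ℕ) :
    ∀ δ : ℝ, 0 < δ → ∃ n : Fin d → ℤ, ∀ ε : Fin d → Bool, ε ≠ vertex0 d →
      dist ((T.toEquiv ^ dotP n ε) x) y < δ ∧ dist ((T.toEquiv ^ dotP n ε) y) y < δ := by
  induction d with
  | zero =>
      intro δ hδ
      exact ⟨fun i => 0, fun ε hε => absurd (funext fun i => i.elim0) hε⟩
  | succ d ih =>
      intro δ hδ
      obtain ⟨j, hjx, hjy⟩ := key (δ/2) (by linarith)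
      have hcont : ContinuousAt (fun a => (T.toEquiv ^ j) a) y := (cont_zpow T j).continuousAt
      rw [Metric.continuousAt_iff] at hcont
      obtain ⟨δ', hδ', hδ'imp⟩ := hcont (δ/2) (by linarith)
      set δ'' := min δ' δ with hδ''def
      have hδ''pos : 0 < δ'' := lt_min hδ' hδ
      obtain ⟨n, hn⟩ := ih δ'' hδ''pos
      refine ⟨Fin.cons j n, fun ε hε => ?_⟩
      set tl : Fin d → Bool := fun i => ε i.succ with htl
      rw [dotP_cons]
      cases h0 : ε 0 with
      | false =>
          have htlne : tl ≠ vertex0 d := by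
            intro hc
            apply hε
            funext i
            refine Fin.cases ?_ ?_ i
            · exact h0
            · intro k; exact congrFun hc k
          simp only [Bool.false_eq_true, if_false, zero_add]
          obtain ⟨h1, h2⟩ := hn tl htlne
          exact ⟨h1.trans_le (min_le_right _ _), h2.trans_le (min_le_right _ _)⟩
      | true =>
          simp only [reduceIte]
          by_cases htlz : tl = vertex0 d
          · have hk : dotP n (fun i => ε i.succ) = 0 := by
              rw [show (fun i => ε i.succ) = vertex0 d from htlz]; exact dotP_vertex0 n
            rw [hk, add_zero]
            exact ⟨hjx.trans (by linarith), hjy.trans (by linarith)⟩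
          · obtain ⟨h1, h2⟩ := hn tl htlz
            have h1' : dist ((T.toEquiv ^ dotP n tl) x) y < δ' := h1.trans_le (min_le_left _ _)
            have h2' : dist ((T.toEquiv ^ dotP n tl) y) y < δ' := h2.trans_le (min_le_left _ _)
            constructor
            · rw [zpow_add_apply]
              calc dist ((T.toEquiv ^ j) ((T.toEquiv ^ dotP n tl) x)) y
                  ≤ dist ((T.toEquiv ^ j) ((T.toEquiv ^ dotP n tl) x)) ((T.toEquiv ^ j) y)
                    + dist ((T.toEquiv ^ j) y) y := dist_triangle _ _ _
                _ < δ/2 + δ/2 := add_lt_add (hδ'imp h1') hjy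
                _ = δ := by ring
            · rw [zpow_add_apply]
              calc dist ((T.toEquiv ^ j) ((T.toEquiv ^ dotP n tl) y)) y
                  ≤ dist ((T.toEquiv ^ j) ((T.toEquiv ^ dotP n tl) y)) ((T.toEquiv ^ j) y)
                    + dist ((T.toEquiv ^ j) y) y := dist_triangle _ _ _
                _ < δ/2 + δ/2 := add_lt_add (hδ'imp h2') hjy
                _ = δ := by ring


/-- If `x` and `y` are proximal and the closed orbit of `y` is minimal, then
`(x, y, …, y) ∈ Q^[d](X)`. -/
theorem proximal_point_in_cubeQ
    {X : Type*} [MetricSpace X] [CompactSpace X] (T : X ≃ₜ X) (d : ℕ) (hd : 1 ≤ d)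
    (x y : X)
    (hprox : ∀ δ > 0, ∀ N : ℕ, ∃ n : ℕ, N ≤ n ∧
      dist ((T.toEquiv ^ (n : ℤ)) x) ((T.toEquiv ^ (n : ℤ)) y) < δ)
    (hmin : ∀ z ∈ closure (Set.range fun n : ℤ => (T.toEquiv ^ n) y),
      closure (Set.range fun n : ℤ => (T.toEquiv ^ n) y) ⊆
        closure (Set.range fun n : ℤ => (T.toEquiv ^ n) z)) :
    (fun ε : Fin d → Bool => if ε = vertex0 d then x else y) ∈ cubeQ X T d := by
  have key : ∀ δ : ℝ, 0 < δ →
      ∃ n : ℤ, dist ((T.toEquiv ^ n) x) y < δ ∧ dist ((T.toEquiv ^ n) y) y < δ := by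
    intro δ hδ
    exact key_lemma T x y hprox hmin hδ
  rw [cubeQ, Metric.mem_closure_iff]
  intro δ hδ
  obtain ⟨n, hn⟩ := multi_lemma T x y key d δ hδ
  refine ⟨fun ε => (T.toEquiv ^ dotP n ε) x, ⟨x, n, rfl⟩, ?_⟩
  rw [dist_pi_lt_iff hδ]
  intro ε
  by_cases hε : ε = vertex0 d
  · subst hε
    rw [if_pos rfl, dotP_vertex0, zpow_zero]
    simpa using hδ
  · rw [if_neg hε, dist_comm]
    exact (hn ε hε).1
end
end

section
/- Let (X,T) be a transitive topological dynamical system and d ≥ 1. Suppose that whenever x,y ∈ X satisfy (x, y, y, …, y) ∈ Q^[d](X), one has x = y. Then (X,T) is distal. -/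
open Filter Topology

noncomputable section

namespace DistalAux

variable {X : Type*} [MetricSpace X] [CompactSpace X] (T : X ≃ₜ X)

lemma contPow (n : ℤ) : Continuous fun p : X => (T.toEquiv ^ n) p := by
  induction n using Int.induction_on with
  | zero => simpa using continuous_id'
  | succ k ih =>
      have : (fun p : X => (T.toEquiv ^ ((k : ℤ) + 1)) p)
          = (fun p : X => (T.toEquiv ^ (k : ℤ)) p) ∘ T := by
        funext p; rw [zpow_add]; rfl
      rw [this]; exact ih.comp T.continuous
  | pred k ih =>
      have : (fun p : X => (T.toEquiv ^ (-(k : ℤ) - 1)) p)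
          = (fun p : X => (T.toEquiv ^ (-(k : ℤ))) p) ∘ T.symm := by
        funext p; rw [sub_eq_add_neg, zpow_add]; rfl
      rw [this]; exact ih.comp T.symm.continuous

/-- The Ellis semigroup: closure of the powers of `T` in `X → X`. -/
def Ell : Set (X → X) := closure (Set.range fun n : ℤ => fun p : X => (T.toEquiv ^ n) p)

lemma pow_mem_Ell (n : ℤ) : (fun p : X => (T.toEquiv ^ n) p) ∈ Ell T :=
  subset_closure ⟨n, rfl⟩

lemma isClosed_Ell : IsClosed (Ell T) := isClosed_closure

lemma isCompact_Ell : IsCompact (Ell T) := (isClosed_Ell T).isCompact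

lemma comp_mem_Ell {f g : X → X} (hf : f ∈ Ell T) (hg : g ∈ Ell T) : f ∘ g ∈ Ell T := by
  -- Step 1: T^n ∘ g ∈ Ell for all n
  have step1 : ∀ n : ℤ, (fun p : X => (T.toEquiv ^ n) (g p)) ∈ Ell T := by
    intro n
    have hΦ : Continuous fun h : X → X => (fun p : X => (T.toEquiv ^ n) (h p)) :=
      continuous_pi fun p => (contPow T n).comp (continuous_apply p)
    have himg : (fun h : X → X => (fun p : X => (T.toEquiv ^ n) (h p))) ''
        (Set.range fun m : ℤ => fun p : X => (T.toEquiv ^ m) p) ⊆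
        (Set.range fun m : ℤ => fun p : X => (T.toEquiv ^ m) p) := by
      rintro _ ⟨_, ⟨m, rfl⟩, rfl⟩
      refine ⟨n + m, ?_⟩
      funext p
      show (T.toEquiv ^ (n + m)) p = (T.toEquiv ^ n) ((T.toEquiv ^ m) p)
      rw [zpow_add]; rfl
    have hg' : g ∈ closure (Set.range fun m : ℤ => fun p : X => (T.toEquiv ^ m) p) := hg
    have h2 := (image_closure_subset_closure_image hΦ)
      (Set.mem_image_of_mem (fun h : X → X => (fun p : X => (T.toEquiv ^ n) (h p))) hg')
    exact closure_mono himg h2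
  -- Step 2
  have hΨ : Continuous fun h : X → X => h ∘ g :=
    continuous_pi fun p => continuous_apply (g p)
  have himg : (fun h : X → X => h ∘ g) ''
      (Set.range fun m : ℤ => fun p : X => (T.toEquiv ^ m) p) ⊆ Ell T := by
    rintro _ ⟨_, ⟨m, rfl⟩, rfl⟩
    exact step1 m
  have hf' : f ∈ closure (Set.range fun m : ℤ => fun p : X => (T.toEquiv ^ m) p) := hf
  have h2 := (image_closure_subset_closure_image hΨ)
    (Set.mem_image_of_mem (fun h : X → X => h ∘ g) hf')
  have := closure_mono himg h2
  rwa [(isClosed_Ell T).closure_eq] at this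

/-- From a proximal pair we obtain an idempotent `u` in the Ellis semigroup
with `u x = u y`. -/
lemma exists_idem (x y : X)
    (hprox : ∀ δ > 0, ∃ m : ℤ, dist ((T.toEquiv ^ m) x) ((T.toEquiv ^ m) y) < δ) :
    ∃ u : X → X, u ∈ Ell T ∧ u x = u y ∧ u ∘ u = u := by
  classical
  -- the set F
  set F : Set (X → X) := {f | f ∈ Ell T ∧ f x = f y} with hF
  have hFclosed : IsClosed F :=
    (isClosed_Ell T).inter (isClosed_eq (continuous_apply x) (continuous_apply y))
  -- F nonempty
  have hFne : F.Nonempty := by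
    choose m hm using fun k : ℕ => hprox (1 / (k + 1)) (by positivity)
    obtain ⟨w, -, φ, hφ, hw⟩ := isCompact_univ.tendsto_subseq
      (x := fun k => (T.toEquiv ^ m k) x) (fun k => Set.mem_univ _)
    have hwy : Tendsto (fun k => (T.toEquiv ^ m (φ k)) y) atTop (𝓝 w) := by
      rw [tendsto_iff_dist_tendsto_zero]
      apply squeeze_zero (fun k => dist_nonneg)
        (g := fun k => 1 / (φ k + 1) + dist ((T.toEquiv ^ m (φ k)) x) w)
      · intro k
        calc dist ((T.toEquiv ^ m (φ k)) y) w
            ≤ dist ((T.toEquiv ^ m (φ k)) y) ((T.toEquiv ^ m (φ k)) x)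
              + dist ((T.toEquiv ^ m (φ k)) x) w := dist_triangle _ _ _
          _ ≤ 1 / (φ k + 1) + dist ((T.toEquiv ^ m (φ k)) x) w := by
              have := hm (φ k)
              rw [dist_comm]
              push_cast
              linarith
      · have h1 : Tendsto (fun k : ℕ => 1 / ((φ k : ℝ) + 1)) atTop (𝓝 0) := by
          apply tendsto_one_div_add_atTop_nhds_zero_nat.comp
          exact hφ.tendsto_atTop
        have h2 : Tendsto (fun k => dist ((T.toEquiv ^ m (φ k)) x) w) atTop (𝓝 0) :=
          tendsto_iff_dist_tendsto_zero.mp hw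
        simpa using h1.add h2
    -- (w,w) is in the closure of the orbit of (x,y)
    have hww : (w, w) ∈ closure (Set.range fun k : ℤ =>
        ((T.toEquiv ^ k) x, (T.toEquiv ^ k) y)) := by
      apply mem_closure_of_tendsto (hw.prodMk_nhds hwy)
      exact Eventually.of_forall fun k => ⟨m (φ k), rfl⟩
    -- evaluation map
    have hev : Continuous fun f : X → X => (f x, f y) :=
      (continuous_apply x).prodMk (continuous_apply y)
    have himgcl : IsClosed ((fun f : X → X => (f x, f y)) '' Ell T) :=
      ((isCompact_Ell T).image hev).isClosed
    have hsub : closure (Set.range fun k : ℤ =>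
        ((T.toEquiv ^ k) x, (T.toEquiv ^ k) y)) ⊆
        (fun f : X → X => (f x, f y)) '' Ell T := by
      apply closure_minimal _ himgcl
      rintro _ ⟨k, rfl⟩
      exact ⟨_, pow_mem_Ell T k, rfl⟩
    obtain ⟨f, hfE, hfeq⟩ := hsub hww
    refine ⟨f, hfE, ?_⟩
    have h1 : f x = w := congrArg Prod.fst hfeq
    have h2 : f y = w := congrArg Prod.snd hfeq
    rw [h1, h2]
  -- idempotent via Ellis–Numakura
  letI : TopologicalSpace (Function.End X) := inferInstanceAs (TopologicalSpace (X → X))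
  haveI : T2Space (Function.End X) := inferInstanceAs (T2Space (X → X))
  have hcml : ∀ r : Function.End X, Continuous fun f : Function.End X => f * r :=
    fun r => continuous_pi fun p => continuous_apply (r p)
  have hmul : ∀ f ∈ F, ∀ g ∈ F, (f : X → X) ∘ g ∈ F := by
    rintro f ⟨hfE, hfxy⟩ g ⟨hgE, hgxy⟩
    refine ⟨comp_mem_Ell T hfE hgE, ?_⟩
    simp only [Function.comp_apply, hgxy]
  obtain ⟨u, huF, hu⟩ := exists_idempotent_in_compact_subsemigroup
    (M := Function.End X) hcml F hFne (hFclosed.isCompact) hmul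
  exact ⟨u, huF.1, huF.2, hu⟩

/-- Key approximation: simultaneous near-returns. -/
lemma near_returns {u : X → X} (huE : u ∈ Ell T) (a z : X) (hz : u a = z) (hzz : u z = z) :
    ∀ δ > 0, ∃ m : ℤ, dist ((T.toEquiv ^ m) a) z < δ ∧ dist ((T.toEquiv ^ m) z) z < δ := by
  intro δ hδ
  have hopen : IsOpen {f : X → X | dist (f a) z < δ ∧ dist (f z) z < δ} :=
    IsOpen.inter
      (isOpen_lt ((continuous_apply a).dist continuous_const) continuous_const)
      (isOpen_lt ((continuous_apply z).dist continuous_const) continuous_const)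
  have humem : u ∈ {f : X → X | dist (f a) z < δ ∧ dist (f z) z < δ} := by
    constructor <;> simp [hz, hzz, hδ]
  obtain ⟨f, hf1, hf2⟩ := (mem_closure_iff.mp huE) _ hopen humem
  obtain ⟨m, rfl⟩ := hf2
  exact ⟨m, hf1.1, hf1.2⟩

lemma dotP_vertex0 {d : ℕ} (n : Fin d → ℤ) : dotP n (vertex0 d) = 0 := by
  simp [dotP, vertex0]

/-- Main induction: from simultaneous near-returns, all off-`vertex0` cube coordinates
can be made close to `z` with base point exactly `a`. -/
lemma cube_approx (a z : X)
    (h : ∀ δ > 0, ∃ m : ℤ, dist ((T.toEquiv ^ m) a) z < δ ∧ dist ((T.toEquiv ^ m) z) z < δ) :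
    ∀ (d : ℕ) (δ : ℝ), 0 < δ → ∃ n : Fin d → ℤ, ∀ ε : Fin d → Bool,
      ε ≠ vertex0 d → dist ((T.toEquiv ^ dotP n ε) a) z < δ := by
  intro d
  induction d with
  | zero =>
      intro δ hδ
      refine ⟨fun i => 0, fun ε hε => absurd ?_ hε⟩
      funext i; exact i.elim0
  | succ d ih =>
      intro δ hδ
      obtain ⟨m, hm1, hm2⟩ := h (δ / 2) (by positivity)
      obtain ⟨η, hη, hcont⟩ := Metric.continuousAt_iff.mp ((contPow T m).continuousAt (x := z))
        (δ / 2) (by positivity)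
      obtain ⟨n', hn'⟩ := ih (min η δ) (lt_min hη hδ)
      refine ⟨Fin.cons m n', fun ε hε => ?_⟩
      have hdec : dotP (Fin.cons m n') ε
          = (if ε 0 then m else 0) + dotP n' (fun i => ε i.succ) := by
        simp [dotP, Fin.sum_univ_succ]
      have happ : ∀ (b c : ℤ) (p : X), (T.toEquiv ^ (b + c)) p
          = (T.toEquiv ^ b) ((T.toEquiv ^ c) p) := by
        intro b c p; rw [zpow_add]; rfl
      by_cases hε0 : ε 0
      · by_cases hε' : (fun i => ε i.succ) = vertex0 d
        · have : dotP n' (fun i => ε i.succ) = 0 := by rw [hε']; exact dotP_vertex0 n'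
          rw [hdec, if_pos hε0, this, add_zero]
          linarith [hm1]
        · have hin := hn' _ hε'
          rw [hdec, if_pos hε0, happ]
          calc dist ((T.toEquiv ^ m) ((T.toEquiv ^ dotP n' fun i => ε i.succ) a)) z
              ≤ dist ((T.toEquiv ^ m) ((T.toEquiv ^ dotP n' fun i => ε i.succ) a))
                  ((T.toEquiv ^ m) z) + dist ((T.toEquiv ^ m) z) z := dist_triangle _ _ _
            _ < δ / 2 + δ / 2 := by
                have := hcont (lt_of_lt_of_le hin (min_le_left _ _))
                exact add_lt_add this hm2
            _ = δ := by ring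
      · have hε' : (fun i => ε i.succ) ≠ vertex0 d := by
          intro hc
          apply hε
          funext i
          refine Fin.cases ?_ ?_ i
          · simpa [vertex0] using hε0
          · intro j; exact congrFun hc j
        have hin := hn' _ hε'
        rw [hdec, if_neg hε0, zero_add]
        exact lt_of_lt_of_le hin (min_le_right _ _)

lemma mem_cubeQ (a z : X)
    (h : ∀ δ > 0, ∃ m : ℤ, dist ((T.toEquiv ^ m) a) z < δ ∧ dist ((T.toEquiv ^ m) z) z < δ)
    (d : ℕ) :
    (fun ε : Fin d → Bool => if ε = vertex0 d then a else z) ∈ cubeQ X T d := by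
  rw [cubeQ, Metric.mem_closure_iff]
  intro δ hδ
  obtain ⟨n, hn⟩ := cube_approx T a z h d (δ / 2) (by positivity)
  refine ⟨fun ε => (T.toEquiv ^ dotP n ε) a, ⟨a, n, rfl⟩, ?_⟩
  rw [dist_pi_lt_iff hδ]
  intro ε
  by_cases hε : ε = vertex0 d
  · subst hε
    simp only [if_pos rfl, dotP_vertex0, zpow_zero]
    simpa using hδ
  · rw [if_neg hε, dist_comm]
    exact lt_of_lt_of_le (hn ε hε) (by linarith)

end DistalAux

/-- If `(x,y,…,y) ∈ Q^[d]` forces `x = y` in a transitive system, then the system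
is distal. -/
theorem distal_of_cubeQ_condition
    {X : Type*} [MetricSpace X] [CompactSpace X] (T : X ≃ₜ X) (d : ℕ) (hd : 1 ≤ d)
    (htrans : ∃ x : X, Dense (Set.range fun n : ℤ => (T.toEquiv ^ n) x))
    (hyp : ∀ x y : X,
      (fun ε : Fin d → Bool => if ε = vertex0 d then x else y) ∈ cubeQ X T d → x = y) :
    ∀ x y : X, x ≠ y →
      ∃ δ > 0, ∀ n : ℤ, δ ≤ dist ((T.toEquiv ^ n) x) ((T.toEquiv ^ n) y) := by
  intro x y hxy
  by_contra hcon
  push_neg at hcon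
  have hprox : ∀ δ > 0, ∃ m : ℤ, dist ((T.toEquiv ^ m) x) ((T.toEquiv ^ m) y) < δ := by
    intro δ hδ
    obtain ⟨n, hn⟩ := hcon δ hδ
    exact ⟨n, hn⟩
  obtain ⟨u, huE, huxy, huid⟩ := DistalAux.exists_idem T x y hprox
  set z := u x with hz
  have huz : u z = z := by
    have := congrFun huid x
    simpa [Function.comp] using this
  have hx : x = z :=
    hyp x z (DistalAux.mem_cubeQ T x z (DistalAux.near_returns T huE x z rfl huz) d)
  have hy : y = z :=
    hyp y z (DistalAux.mem_cubeQ T y z (DistalAux.near_returns T huE y z huxy.symm huz) d)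
  exact hxy (hx.trans hy.symm)
end
end

section
/- Let π: (X,T) → (Y,S) be a factor map of topological dynamical systems (π continuous, surjective, π∘T = S∘π) and d ≥ 1. Then Q^[d](Y) is the image of Q^[d](X) under the product map π^{[d]} = π × … × π (2^d times). -/
open Filter Topology

noncomputable section

/-- `Q^[d](Y)` is the image of `Q^[d](X)` under a factor map. -/
theorem cubeQ_image_of_factor
    {X Y : Type*} [MetricSpace X] [CompactSpace X] [MetricSpace Y] [CompactSpace Y]
    (T : X ≃ₜ X) (S : Y ≃ₜ Y) (π : X → Y)
    (hπcont : Continuous π) (hπsurj : Function.Surjective π)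
    (hπcomm : ∀ x : X, π (T x) = S (π x)) (d : ℕ) :
    cubeQ Y S d = (fun u : (Fin d → Bool) → X => π ∘ u) '' cubeQ X T d := by
  -- commutation for integer powers
  have hcomm : ∀ (k : ℤ) (x : X), π ((T.toEquiv ^ k) x) = (S.toEquiv ^ k) (π x) := by
    have hinv : ∀ x : X, π (T.toEquiv⁻¹ x) = S.toEquiv⁻¹ (π x) := by
      intro x
      have h := hπcomm (T.toEquiv⁻¹ x)
      have hTx : (T : X → X) (T.toEquiv⁻¹ x) = x := T.toEquiv.apply_symm_apply x
      rw [hTx] at h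
      have : S.toEquiv⁻¹ (π x) = S.toEquiv⁻¹ ((S : Y → Y) (π (T.toEquiv⁻¹ x))) := by
        rw [← h]
      rw [this]
      exact (S.toEquiv.symm_apply_apply _).symm
    intro k
    induction k using Int.induction_on with
    | zero => simp
    | succ n ih =>
        intro x
        have : (T.toEquiv ^ ((n : ℤ) + 1)) x = T ((T.toEquiv ^ (n : ℤ)) x) := by
          rw [add_comm, zpow_add, zpow_one]; rfl
        rw [this, hπcomm, ih, add_comm, zpow_add, zpow_one]; rfl
    | pred n ih =>
        intro x
        have : (T.toEquiv ^ (-(n : ℤ) - 1)) x = T.toEquiv⁻¹ ((T.toEquiv ^ (-(n : ℤ))) x) := by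
          rw [sub_eq_add_neg, add_comm, zpow_add, zpow_neg, zpow_one]; rfl
        have h2 : (S.toEquiv ^ (-(n : ℤ) - 1)) = S.toEquiv⁻¹ * S.toEquiv ^ (-(n : ℤ)) := by
          rw [sub_eq_add_neg, add_comm, zpow_add, zpow_neg_one]
        rw [this, hinv, ih, h2, Equiv.Perm.mul_apply]
  set F : ((Fin d → Bool) → X) → ((Fin d → Bool) → Y) := fun u => π ∘ u with hF
  have hFcont : Continuous F := continuous_pi fun ε => hπcont.comp (continuous_apply ε)
  set sX : Set ((Fin d → Bool) → X) :=
    {y | ∃ (x : X) (n : Fin d → ℤ), y = fun ε => (T.toEquiv ^ dotP n ε) x} with hsX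
  set sY : Set ((Fin d → Bool) → Y) :=
    {y | ∃ (x : Y) (n : Fin d → ℤ), y = fun ε => (S.toEquiv ^ dotP n ε) x} with hsY
  have himg : F '' sX = sY := by
    ext v
    constructor
    · rintro ⟨u, ⟨x, n, rfl⟩, rfl⟩
      exact ⟨π x, n, funext fun ε => hcomm _ _⟩
    · rintro ⟨y, n, rfl⟩
      obtain ⟨x, rfl⟩ := hπsurj y
      exact ⟨fun ε => (T.toEquiv ^ dotP n ε) x, ⟨x, n, rfl⟩,
        funext fun ε => (hcomm _ _)⟩
  have hclosed : IsClosed (F '' closure sX) :=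
    ((isClosed_closure.isCompact).image hFcont).isClosed
  have h1 : closure sY ⊆ F '' closure sX := by
    rw [← himg]
    exact closure_minimal (Set.image_mono (f := F) subset_closure) hclosed
  have h2 : F '' closure sX ⊆ closure sY := by
    rw [← himg]
    exact (image_closure_subset_closure_image hFcont)
  exact le_antisymm h1 h2
end
end

section
/- Let (X,T) be a minimal distal system and d ≥ 1. Then (Q^[d](X), G^[d]) is a minimal distal system, where G^[d] is the group of transformations of X^{2^d} generated by the diagonal transformation and the face transformations. -/
open Filter Topology

noncomputable section

/-- The face transformation `T_j^[d]`. -/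
def faceT {X : Type*} (T : Equiv.Perm X) (d : ℕ) (j : Fin d) :
    Equiv.Perm ((Fin d → Bool) → X) :=
  Equiv.piCongrRight fun ε => if ε j then T else Equiv.refl X

/-- The diagonal transformation `T^[d]`. -/
def diagT {X : Type*} (T : Equiv.Perm X) (d : ℕ) :
    Equiv.Perm ((Fin d → Bool) → X) :=
  Equiv.piCongrRight fun _ => T

/-- The face group `F^[d]`. -/
def faceGroup {X : Type*} (T : Equiv.Perm X) (d : ℕ) :
    Subgroup (Equiv.Perm ((Fin d → Bool) → X)) :=
  Subgroup.closure (Set.range (faceT T d))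

/-- The parallelepiped group `G^[d]`. -/
def cubeGroup {X : Type*} (T : Equiv.Perm X) (d : ℕ) :
    Subgroup (Equiv.Perm ((Fin d → Bool) → X)) :=
  Subgroup.closure (insert (diagT T d) (Set.range (faceT T d)))

namespace CubeAux

lemma dotP_zero {d : ℕ} (ε : Fin d → Bool) : dotP 0 ε = 0 := by simp [dotP]

lemma dotP_add {d : ℕ} (m n : Fin d → ℤ) (ε : Fin d → Bool) :
    dotP (m + n) ε = dotP m ε + dotP n ε := by
  simp only [dotP, Pi.add_apply, ← Finset.sum_add_distrib]
  refine Finset.sum_congr rfl fun i _ => ?_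
  by_cases h : ε i <;> simp [h]

lemma dotP_neg {d : ℕ} (m : Fin d → ℤ) (ε : Fin d → Bool) :
    dotP (-m) ε = - dotP m ε := by
  simp only [dotP, Pi.neg_apply, ← Finset.sum_neg_distrib]
  refine Finset.sum_congr rfl fun i _ => ?_
  by_cases h : ε i <;> simp [h]

variable {X : Type*}

/-- coordinatewise power transformation -/
def EE (T : Equiv.Perm X) {d : ℕ} (c : (Fin d → Bool) → ℤ) :
    Equiv.Perm ((Fin d → Bool) → X) :=
  Equiv.piCongrRight fun ε => T ^ (c ε)

lemma EE_apply (T : Equiv.Perm X) {d : ℕ} (c : (Fin d → Bool) → ℤ)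
    (y : (Fin d → Bool) → X) (ε : Fin d → Bool) : EE T c y ε = (T ^ c ε) (y ε) := rfl

lemma EE_zero (T : Equiv.Perm X) {d : ℕ} : EE T (0 : (Fin d → Bool) → ℤ) = 1 := by
  ext y ε; simp [EE_apply]

lemma EE_add (T : Equiv.Perm X) {d : ℕ} (c₁ c₂ : (Fin d → Bool) → ℤ) :
    EE T (c₁ + c₂) = EE T c₁ * EE T c₂ := by
  ext y ε
  simp only [EE_apply, Equiv.Perm.mul_apply, Pi.add_apply]
  rw [zpow_add]
  rfl

/-- EE as an additive monoid hom into `Additive`. -/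
def EEadd (T : Equiv.Perm X) (d : ℕ) :
    ((Fin d → Bool) → ℤ) →+ Additive (Equiv.Perm ((Fin d → Bool) → X)) where
  toFun c := Additive.ofMul (EE T c)
  map_zero' := congrArg Additive.ofMul (EE_zero T)
  map_add' c₁ c₂ := congrArg Additive.ofMul (EE_add T c₁ c₂)

lemma EE_zsmul (T : Equiv.Perm X) {d : ℕ} (k : ℤ) (c : (Fin d → Bool) → ℤ) :
    EE T (k • c) = (EE T c) ^ k := by
  have := map_zsmul (EEadd T d) k c
  simpa [EEadd, ← ofMul_zpow] using this

lemma EE_inv (T : Equiv.Perm X) {d : ℕ} (c : (Fin d → Bool) → ℤ) :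
    (EE T c)⁻¹ = EE T (-c) := by
  have h : EE T c * EE T (-c) = 1 := by
    rw [← EE_add, add_neg_cancel, EE_zero]
  exact inv_eq_of_mul_eq_one_right h

lemma diagT_eq_EE (T : Equiv.Perm X) (d : ℕ) :
    diagT T d = EE T (fun _ => (1 : ℤ)) := by
  unfold diagT EE
  exact congrArg _ (funext fun ε => (zpow_one T).symm)

lemma faceT_eq_EE (T : Equiv.Perm X) (d : ℕ) (j : Fin d) :
    faceT T d j = EE T (fun ε => if ε j then 1 else 0) := by
  unfold faceT EE
  refine congrArg _ (funext fun ε => ?_)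
  by_cases h : ε j
  · simp [h]
  · simp only [h, if_false, zpow_zero]
    rfl

/-- Subgroup of coordinatewise powers with affine exponent. -/
def expoSub (T : Equiv.Perm X) (d : ℕ) :
    Subgroup (Equiv.Perm ((Fin d → Bool) → X)) where
  carrier := {S | ∃ (k : ℤ) (m : Fin d → ℤ), S = EE T (fun ε => k + dotP m ε)}
  one_mem' := ⟨0, 0, by rw [eq_comm]; simpa [dotP_zero] using (show EE T (fun _ => (0:ℤ)) = 1 from EE_zero T)⟩
  mul_mem' := by
    rintro S₁ S₂ ⟨k₁, m₁, rfl⟩ ⟨k₂, m₂, rfl⟩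
    refine ⟨k₁ + k₂, m₁ + m₂, ?_⟩
    rw [← EE_add]
    congr 1
    funext ε
    simp only [Pi.add_apply, dotP_add]
    ring
  inv_mem' := by
    rintro S ⟨k, m, rfl⟩
    refine ⟨-k, -m, ?_⟩
    rw [EE_inv]
    congr 1
    funext ε
    simp only [Pi.neg_apply, dotP_neg]
    omega

lemma cubeGroup_char (T : Equiv.Perm X) (d : ℕ) :
    ∀ S ∈ cubeGroup T d, ∃ (k : ℤ) (m : Fin d → ℤ),
      S = EE T (fun ε => k + dotP m ε) := by
  intro S hS
  have hle : cubeGroup T d ≤ expoSub T d := by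
    rw [cubeGroup, Subgroup.closure_le]
    rintro S' (rfl | ⟨j, rfl⟩)
    · exact ⟨1, 0, by rw [diagT_eq_EE]; congr 1; funext ε; simp [dotP_zero]⟩
    · refine ⟨0, Pi.single j 1, ?_⟩
      rw [faceT_eq_EE]
      congr 1
      funext ε
      rw [zero_add, dotP]
      rw [Finset.sum_eq_single j]
      · by_cases h : ε j <;> simp [h]
      · intro i _ hij
        by_cases h : ε i <;> simp [h, Pi.single_apply, hij]
      · simp
  exact hle hS

/-- The additive subgroup of exponent functions whose `EE` lies in the cube group. -/
def expoGrp (T : Equiv.Perm X) (d : ℕ) : AddSubgroup ((Fin d → Bool) → ℤ) where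
  carrier := {c | EE T c ∈ cubeGroup T d}
  zero_mem' := by rw [Set.mem_setOf_eq, EE_zero]; exact one_mem _
  add_mem' := by
    intro a b ha hb
    rw [Set.mem_setOf_eq, EE_add]
    exact mul_mem ha hb
  neg_mem' := by
    intro a ha
    rw [Set.mem_setOf_eq, ← EE_inv]
    exact inv_mem ha

lemma EE_mem_cubeGroup (T : Equiv.Perm X) (d : ℕ) (k : ℤ) (m : Fin d → ℤ) :
    EE T (fun ε => k + dotP m ε) ∈ cubeGroup T d := by
  classical
  have hdiag : (fun _ => (1:ℤ)) ∈ expoGrp T d := by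
    have h1 : EE T (fun _ => (1:ℤ)) ∈ cubeGroup T d := by
      rw [← diagT_eq_EE]
      exact Subgroup.subset_closure (Set.mem_insert _ _)
    exact h1
  have hface : ∀ j, (fun ε => if ε j then (1:ℤ) else 0) ∈ expoGrp T d := by
    intro j
    have h1 : EE T (fun ε => if ε j then (1:ℤ) else 0) ∈ cubeGroup T d := by
      rw [← faceT_eq_EE]
      exact Subgroup.subset_closure (Set.mem_insert_of_mem _ ⟨j, rfl⟩)
    exact h1
  have hdecomp : (fun ε => k + dotP m ε) =
      k • (fun _ => (1 : ℤ)) + ∑ j, (m j) • (fun ε => if ε j then (1:ℤ) else 0) := by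
    funext ε
    simp only [Pi.add_apply, Pi.smul_apply, Finset.sum_apply, smul_eq_mul, mul_one, mul_ite,
      mul_zero, dotP]
  have hmem : (fun ε => k + dotP m ε) ∈ expoGrp T d := by
    rw [hdecomp]
    exact add_mem (zsmul_mem hdiag k)
      (AddSubgroup.sum_mem _ fun j _ => zsmul_mem (hface j) (m j))
  exact hmem


section Topo

instance functionEndTopology {α : Type*} [TopologicalSpace α] :
    TopologicalSpace (Function.End α) :=
  inferInstanceAs (TopologicalSpace (α → α))

instance functionEndT2 {α : Type*} [TopologicalSpace α] [T2Space α] :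
    T2Space (Function.End α) :=
  inferInstanceAs (T2Space (α → α))

set_option linter.unusedSectionVars false

variable {X : Type*} [MetricSpace X] [CompactSpace X] (T : X ≃ₜ X) (d : ℕ)

lemma contZpow (n : ℤ) : Continuous fun x => (T.toEquiv ^ n) x := by
  induction n using Int.induction_on with
  | zero => simpa using continuous_id'
  | succ k ih =>
      have h : ∀ x, (T.toEquiv ^ ((k : ℤ) + 1)) x = (T.toEquiv ^ (k : ℤ)) (T x) := by
        intro x
        rw [zpow_add, zpow_one, Equiv.Perm.mul_apply]
        rfl
      simp only [h]; exact ih.comp T.continuous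
  | pred k ih =>
      have h : ∀ x, (T.toEquiv ^ (-(k : ℤ) - 1)) x = (T.toEquiv ^ (-(k : ℤ))) (T.symm x) := by
        intro x
        rw [sub_eq_add_neg, zpow_add, Equiv.Perm.mul_apply, zpow_neg_one]
        rfl
      simp only [h]; exact ih.comp T.continuous_symm

lemma EE_continuous (c : (Fin d → Bool) → ℤ) :
    Continuous ⇑(EE T.toEquiv c) := by
  refine continuous_pi fun ε => ?_
  exact (contZpow T (c ε)).comp (continuous_apply ε)

lemma zpow_comp_apply (a b : ℤ) (x : X) :
    (T.toEquiv ^ a) ((T.toEquiv ^ b) x) = (T.toEquiv ^ (a + b)) x := by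
  rw [zpow_add]
  rfl

/-- The base (pre-closure) set of the cube space. -/
def baseSet : Set ((Fin d → Bool) → X) :=
  {y | ∃ (x : X) (n : Fin d → ℤ), y = fun ε => (T.toEquiv ^ dotP n ε) x}

lemma cubeQ_eq : cubeQ X T d = closure (baseSet T d) := rfl

lemma EE_maps_base (k : ℤ) (m : Fin d → ℤ) :
    Set.MapsTo ⇑(EE T.toEquiv (fun ε => k + dotP m ε)) (baseSet T d) (baseSet T d) := by
  rintro y ⟨x, n, rfl⟩
  refine ⟨(T.toEquiv ^ k) x, m + n, ?_⟩
  funext ε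
  rw [EE_apply, zpow_comp_apply, zpow_comp_apply, dotP_add]
  congr 1
  ring

lemma cubeQ_invariant :
    ∀ S ∈ cubeGroup T.toEquiv d, ∀ z ∈ cubeQ X T d, S z ∈ cubeQ X T d := by
  intro S hS z hz
  obtain ⟨k, m, rfl⟩ := cubeGroup_char T.toEquiv d S hS
  rw [cubeQ_eq] at hz ⊢
  exact map_mem_closure (EE_continuous T d _) hz (EE_maps_base T d k m)

lemma distal_omega
    (hdistal : ∀ x y : X, x ≠ y →
      ∃ δ > 0, ∀ n : ℤ, δ ≤ dist ((T.toEquiv ^ n) x) ((T.toEquiv ^ n) y))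
    (z w : (Fin d → Bool) → X) (hzw : z ≠ w) :
    ∃ δ > 0, ∀ S ∈ cubeGroup T.toEquiv d, δ ≤ dist (S z) (S w) := by
  obtain ⟨ε, hε⟩ := Function.ne_iff.mp hzw
  obtain ⟨δ, hδ, hd⟩ := hdistal (z ε) (w ε) hε
  refine ⟨δ, hδ, ?_⟩
  intro S hS
  obtain ⟨k, m, rfl⟩ := cubeGroup_char T.toEquiv d S hS
  have hle := dist_le_pi_dist (EE T.toEquiv (fun ε => k + dotP m ε) z)
    (EE T.toEquiv (fun ε => k + dotP m ε) w) ε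
  rw [EE_apply, EE_apply] at hle
  exact le_trans (hd _) hle

/-- The set of maps coming from the cube group. -/
def grpMaps : Set (((Fin d → Bool) → X) → ((Fin d → Bool) → X)) :=
  {f | ∃ S ∈ cubeGroup T.toEquiv d, f = ⇑S}

/-- The Ellis semigroup: pointwise closure of the group maps. -/
def ellis : Set (((Fin d → Bool) → X) → ((Fin d → Bool) → X)) :=
  closure (grpMaps T d)

lemma grpMaps_continuous {f} (hf : f ∈ grpMaps T d) : Continuous f := by
  obtain ⟨S, hS, rfl⟩ := hf
  obtain ⟨k, m, rfl⟩ := cubeGroup_char T.toEquiv d S hS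
  exact EE_continuous T d _

lemma grpMaps_comp {f g} (hf : f ∈ grpMaps T d) (hg : g ∈ grpMaps T d) :
    f ∘ g ∈ grpMaps T d := by
  obtain ⟨S, hS, rfl⟩ := hf
  obtain ⟨S', hS', rfl⟩ := hg
  exact ⟨S * S', mul_mem hS hS', rfl⟩

lemma id_mem_grpMaps : id ∈ grpMaps T d :=
  ⟨1, one_mem _, (Equiv.Perm.coe_one).symm⟩

lemma comp_left_continuous {α : Type*} [TopologicalSpace α] (q : α → α) :
    Continuous fun p : α → α => p ∘ q :=
  continuous_pi fun x => continuous_apply (q x)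

lemma ellis_comp {p q} (hp : p ∈ ellis T d) (hq : q ∈ ellis T d) :
    p ∘ q ∈ ellis T d := by
  have step1 : ∀ g ∈ grpMaps T d, g ∘ q ∈ ellis T d := by
    intro g hg
    have hcont : Continuous fun r : ((Fin d → Bool) → X) → ((Fin d → Bool) → X) => g ∘ r :=
      continuous_pi fun x => (grpMaps_continuous T d hg).comp (continuous_apply x)
    exact map_mem_closure hcont hq fun g' hg' => grpMaps_comp T d hg hg'
  have h2 : p ∘ q ∈ closure (ellis T d) :=
    map_mem_closure (f := fun r => r ∘ q) (comp_left_continuous q) hp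
      fun g hg => step1 g hg
  have h3 : IsClosed (ellis T d) := isClosed_closure
  rwa [h3.closure_eq] at h2

lemma ellis_isCompact : IsCompact (ellis T d) :=
  isClosed_closure.isCompact

lemma ellis_eval_mem {p} (hp : p ∈ ellis T d) (z : (Fin d → Bool) → X) :
    p z ∈ closure {w | ∃ S ∈ cubeGroup T.toEquiv d, w = S z} := by
  refine map_mem_closure (f := fun p => p z) (continuous_apply z) hp ?_
  rintro f ⟨S, hS, rfl⟩
  exact ⟨S, hS, rfl⟩

lemma exists_ellis_eval {z z' : (Fin d → Bool) → X}
    (hz' : z' ∈ closure {w | ∃ S ∈ cubeGroup T.toEquiv d, w = S z}) :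
    ∃ p ∈ ellis T d, p z = z' := by
  have hK : IsClosed ((fun p => p z) '' ellis T d) :=
    ((ellis_isCompact T d).image (continuous_apply z)).isClosed
  have horb : {w | ∃ S ∈ cubeGroup T.toEquiv d, w = S z} ⊆ (fun p => p z) '' ellis T d := by
    rintro w ⟨S, hS, rfl⟩
    exact ⟨⇑S, subset_closure ⟨S, hS, rfl⟩, rfl⟩
  have := closure_minimal horb hK hz'
  obtain ⟨p, hp, hpz⟩ := this
  exact ⟨p, hp, hpz⟩

lemma ellis_idem_eq_id
    (hdistal : ∀ x y : X, x ≠ y →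
      ∃ δ > 0, ∀ n : ℤ, δ ≤ dist ((T.toEquiv ^ n) x) ((T.toEquiv ^ n) y))
    {u} (hu : u ∈ ellis T d) (huu : u ∘ u = u) : u = id := by
  funext z
  by_contra hne
  have hne' : z ≠ u z := fun h => hne h.symm
  obtain ⟨δ, hδ, hd⟩ := distal_omega T d hdistal z (u z) hne'
  have hclosed : IsClosed {p : ((Fin d → Bool) → X) → ((Fin d → Bool) → X) |
      δ ≤ dist (p z) (p (u z))} := by
    have : Continuous fun p : ((Fin d → Bool) → X) → ((Fin d → Bool) → X) =>
        dist (p z) (p (u z)) :=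
      Continuous.dist (continuous_apply z) (continuous_apply (u z))
    exact isClosed_le continuous_const this
  have hsub : grpMaps T d ⊆ {p | δ ≤ dist (p z) (p (u z))} := by
    rintro f ⟨S, hS, rfl⟩
    exact hd S hS
  have hu' : u ∈ {p | δ ≤ dist (p z) (p (u z))} :=
    (closure_minimal hsub hclosed) hu
  have huz : u (u z) = u z := congrFun huu z
  simp only [Set.mem_setOf_eq] at hu'
  rw [huz, dist_self] at hu'
  exact absurd hu' (not_le.mpr hδ)

lemma exists_left_inverse
    (hdistal : ∀ x y : X, x ≠ y →
      ∃ δ > 0, ∀ n : ℤ, δ ≤ dist ((T.toEquiv ^ n) x) ((T.toEquiv ^ n) y))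
    {p} (hp : p ∈ ellis T d) : ∃ q ∈ ellis T d, q ∘ p = id := by
  classical
  have hKsub : (fun q => q ∘ p) '' ellis T d ⊆ ellis T d := by
    rintro _ ⟨q, hq, rfl⟩
    exact ellis_comp T d hq hp
  have hKne : ((fun q => q ∘ p) '' ellis T d).Nonempty :=
    ⟨id ∘ p, ⟨id, subset_closure (id_mem_grpMaps T d), rfl⟩⟩
  have hKcomp : IsCompact ((fun q => q ∘ p) '' ellis T d) :=
    (ellis_isCompact T d).image (comp_left_continuous p)
  have hKmul : ∀ x ∈ (fun q => q ∘ p) '' ellis T d,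
      ∀ y ∈ (fun q => q ∘ p) '' ellis T d, x ∘ y ∈ (fun q => q ∘ p) '' ellis T d := by
    rintro _ ⟨q₁, hq₁, rfl⟩ _ ⟨q₂, hq₂, rfl⟩
    exact ⟨q₁ ∘ (p ∘ q₂), ellis_comp T d hq₁ (ellis_comp T d hp hq₂), rfl⟩
  obtain ⟨u, huK, huu⟩ :=
    @exists_idempotent_in_compact_subsemigroup
      (Function.End ((Fin d → Bool) → X)) _ functionEndTopology functionEndT2
      (fun r => by exact comp_left_continuous r) ((fun q => q ∘ p) '' ellis T d) hKne hKcomp hKmul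
  have huid : u = id := ellis_idem_eq_id T d hdistal (hKsub huK) huu
  obtain ⟨q, hq, hqp⟩ := huK
  refine ⟨q, hq, ?_⟩
  have : q ∘ p = u := hqp
  rw [this, huid]

lemma cubeQ_isClosed : IsClosed (cubeQ X T d) := by
  rw [cubeQ_eq]; exact isClosed_closure

lemma const_mem_cubeQ (x₀ : X) :
    (fun _ => x₀ : (Fin d → Bool) → X) ∈ cubeQ X T d := by
  rw [cubeQ_eq]
  refine subset_closure ⟨x₀, 0, ?_⟩
  funext ε
  rw [dotP_zero, zpow_zero]
  rfl

lemma orbit_closure_invariant (z : (Fin d → Bool) → X) :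
    ∀ S ∈ cubeGroup T.toEquiv d,
      ∀ w ∈ closure {w | ∃ S ∈ cubeGroup T.toEquiv d, w = S z},
        S w ∈ closure {w | ∃ S ∈ cubeGroup T.toEquiv d, w = S z} := by
  intro S hS w hw
  obtain ⟨k, m, rfl⟩ := cubeGroup_char T.toEquiv d S hS
  refine map_mem_closure (EE_continuous T d _) hw ?_
  rintro _ ⟨S', hS', rfl⟩
  exact ⟨EE T.toEquiv (fun ε => k + dotP m ε) * S',
    mul_mem (EE_mem_cubeGroup T.toEquiv d k m) hS', rfl⟩

lemma cubeQ_eq_orbit_closure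
    (hmin : ∀ x : X, Dense (Set.range fun n : ℤ => (T.toEquiv ^ n) x)) (x₀ : X) :
    cubeQ X T d =
      closure {w | ∃ S ∈ cubeGroup T.toEquiv d, w = S (fun _ => x₀)} := by
  apply Set.Subset.antisymm
  · rw [cubeQ_eq]
    refine closure_minimal ?_ isClosed_closure
    rintro _ ⟨x, n, rfl⟩
    have hφ : Continuous (fun x : X => fun ε => (T.toEquiv ^ dotP n ε) x) :=
      continuous_pi fun ε => contZpow T _
    have hA : IsClosed ((fun x : X => fun ε => (T.toEquiv ^ dotP n ε) x) ⁻¹'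
        closure {w | ∃ S ∈ cubeGroup T.toEquiv d, w = S (fun _ => x₀)}) :=
      isClosed_closure.preimage hφ
    have hrange : Set.range (fun k : ℤ => (T.toEquiv ^ k) x₀) ⊆
        (fun x : X => fun ε => (T.toEquiv ^ dotP n ε) x) ⁻¹'
          closure {w | ∃ S ∈ cubeGroup T.toEquiv d, w = S (fun _ => x₀)} := by
      rintro _ ⟨k, rfl⟩
      refine Set.mem_preimage.mpr (subset_closure
        ⟨EE T.toEquiv (fun ε => k + dotP n ε), EE_mem_cubeGroup T.toEquiv d k n, ?_⟩)
      funext ε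
      rw [EE_apply, zpow_comp_apply, add_comm]
    have huniv : ∀ x : X, x ∈ (fun x : X => fun ε => (T.toEquiv ^ dotP n ε) x) ⁻¹'
        closure {w | ∃ S ∈ cubeGroup T.toEquiv d, w = S (fun _ => x₀)} := by
      intro x
      have h1 := closure_minimal hrange hA
      have h2 := (hmin x₀).closure_eq
      rw [h2] at h1
      exact h1 (Set.mem_univ x)
    exact huniv x
  · refine closure_minimal ?_ (cubeQ_isClosed T d)
    rintro _ ⟨S, hS, rfl⟩
    exact cubeQ_invariant T d S hS _ (const_mem_cubeQ T d x₀)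

lemma cubeQ_minimal
    (hmin : ∀ x : X, Dense (Set.range fun n : ℤ => (T.toEquiv ^ n) x))
    (hdistal : ∀ x y : X, x ≠ y →
      ∃ δ > 0, ∀ n : ℤ, δ ≤ dist ((T.toEquiv ^ n) x) ((T.toEquiv ^ n) y)) :
    ∀ z ∈ cubeQ X T d,
      cubeQ X T d ⊆ closure {w | ∃ S ∈ cubeGroup T.toEquiv d, w = S z} := by
  intro z hz
  rcases isEmpty_or_nonempty X with hX | hX
  · exact isEmptyElim z
  · obtain ⟨x₀⟩ := hX
    have hQ := cubeQ_eq_orbit_closure T d hmin x₀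
    have hz' : z ∈ closure {w | ∃ S ∈ cubeGroup T.toEquiv d, w = S (fun _ => x₀)} := by
      rw [← hQ]; exact hz
    obtain ⟨p, hp, hpz⟩ := exists_ellis_eval T d hz'
    obtain ⟨q, hq, hqp⟩ := exists_left_inverse T d hdistal hp
    have hc₀ : q z = (fun _ => x₀) := by
      rw [← hpz, ← Function.comp_apply (f := q) (g := p), hqp]
      rfl
    have h1 : (fun _ => x₀ : (Fin d → Bool) → X) ∈
        closure {w | ∃ S ∈ cubeGroup T.toEquiv d, w = S z} := by
      rw [← hc₀]
      exact ellis_eval_mem T d hq z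
    rw [hQ]
    refine closure_minimal ?_ isClosed_closure
    rintro _ ⟨S, hS, rfl⟩
    exact orbit_closure_invariant T d z S hS _ h1

end Topo

end CubeAux

/-- For a minimal distal system, `(Q^[d], G^[d])` is a minimal distal system. -/
theorem cubeQ_minimal_distal
    {X : Type*} [MetricSpace X] [CompactSpace X] (T : X ≃ₜ X) (d : ℕ)
    (hmin : ∀ x : X, Dense (Set.range fun n : ℤ => (T.toEquiv ^ n) x))
    (hdistal : ∀ x y : X, x ≠ y →
      ∃ δ > 0, ∀ n : ℤ, δ ≤ dist ((T.toEquiv ^ n) x) ((T.toEquiv ^ n) y)) :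
    (∀ S ∈ cubeGroup T.toEquiv d, ∀ z ∈ cubeQ X T d, S z ∈ cubeQ X T d) ∧
    (∀ z ∈ cubeQ X T d,
      cubeQ X T d ⊆ closure {w | ∃ S ∈ cubeGroup T.toEquiv d, w = S z}) ∧
    (∀ z ∈ cubeQ X T d, ∀ w ∈ cubeQ X T d, z ≠ w →
      ∃ δ > 0, ∀ S ∈ cubeGroup T.toEquiv d, δ ≤ dist (S z) (S w)) :=
  ⟨CubeAux.cubeQ_invariant T d, CubeAux.cubeQ_minimal T d hmin hdistal,
    fun z _ w _ hzw => CubeAux.distal_omega T d hdistal z w hzw⟩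
end
end

section
/- Let (X,T) be a minimal distal system and d ≥ 1. Suppose points x_ε ∈ X are given for all ε ⊊ [d] such that for each j ∈ [d], the tuple (x_ε : j ∉ ε) belongs to Q^[d−1](X). Then there exists x_{[d]} ∈ X such that (x_ε : ε ⊆ [d]) ∈ Q^[d](X). (Property of closing parallelepipeds.) -/
open Filter Topology

noncomputable section

/-! ### Auxiliary theory: an "Ellis cube semigroup" for the action of `T`.

We study the closure `A T d` (inside the compact space of all families of self-maps of `X`
indexed by `{0,1}^d`) of the set `L T d` of "affine families" `ε ↦ T^(n₀ + n·ε)`.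
Key facts:
* `A T d` is a compact right-topological semigroup under componentwise composition;
* by distality, its idempotents are trivial, so (via Ellis–Numakura) every element has a
  two-sided inverse;
* by minimality, `cubeQ X T d` is exactly the set of evaluations of elements of `A T d`
  at any fixed base point.

The theorem then follows by iteratively trivializing the configuration in each direction,
by composing with the inverse of a representative of the corresponding face.
-/

namespace ClosingPara

set_option linter.unusedSectionVars false in
section

variable {X : Type*} [MetricSpace X] [CompactSpace X] (T : X ≃ₜ X)

/-- The `n`-th power of `T` as a plain function. -/
def P (n : ℤ) : X → X := ⇑(T.toEquiv ^ n)

/-- The ambient function space for dimension-`d` cube transformations. -/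
abbrev Φ (X : Type*) (d : ℕ) := (Fin d → Bool) → X → X

/-- Affine families of powers of `T`. -/
def L (d : ℕ) : Set (Φ X d) :=
  {f | ∃ (n₀ : ℤ) (n : Fin d → ℤ), f = fun ε => P T (n₀ + dotP n ε)}

/-- The "Ellis cube semigroup": the closure of the set of affine families. -/
def A (d : ℕ) : Set (Φ X d) := closure (L T d)

/-- The one-dimensional Ellis semigroup of `(X, T)`. -/
def E : Set (X → X) := closure (Set.range fun n : ℤ => P T n)

/-- Componentwise composition. -/
def comp₂ {d : ℕ} (f g : Φ X d) : Φ X d := fun ε => f ε ∘ g ε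

/-- The identity family. -/
def idΦ (X : Type*) (d : ℕ) : Φ X d := fun _ => id

/-- Evaluation at a base point. -/
def ev {d : ℕ} (x₀ : X) (f : Φ X d) : (Fin d → Bool) → X := fun ε => f ε x₀

lemma comp₂_assoc {d : ℕ} (f g h : Φ X d) :
    comp₂ (comp₂ f g) h = comp₂ f (comp₂ g h) := rfl

lemma comp₂_id {d : ℕ} (f : Φ X d) : comp₂ f (idΦ X d) = f := rfl

lemma id_comp₂ {d : ℕ} (f : Φ X d) : comp₂ (idΦ X d) f = f := rfl

lemma continuous_perm_pow (e : Equiv.Perm X) (he : Continuous ⇑e) (k : ℕ) :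
    Continuous ⇑(e ^ k) := by
  induction k with
  | zero => simpa using continuous_id
  | succ k ih =>
    have : ⇑(e ^ (k+1)) = ⇑(e ^ k) ∘ ⇑e := by rw [pow_succ]; rfl
    rw [this]; exact ih.comp he

lemma continuous_P (n : ℤ) : Continuous (P T n) := by
  unfold P
  induction n using Int.rec with
  | ofNat k =>
    rw [Int.ofNat_eq_coe, zpow_natCast]
    exact continuous_perm_pow T.toEquiv T.continuous k
  | negSucc k =>
    rw [zpow_negSucc, ← inv_pow]
    have h : (T.toEquiv)⁻¹ = T.symm.toEquiv := rfl
    rw [h]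
    exact continuous_perm_pow _ T.symm.continuous (k+1)

lemma P_add (a b : ℤ) : P T (a + b) = P T a ∘ P T b := by
  unfold P; rw [zpow_add]; rfl

lemma continuous_ev {d : ℕ} (x₀ : X) : Continuous (ev (X := X) (d := d) x₀) :=
  continuous_pi fun ε => (continuous_apply x₀).comp (continuous_apply ε)

lemma continuous_comp₂_right {d : ℕ} (q : Φ X d) :
    Continuous (fun p : Φ X d => comp₂ p q) :=
  continuous_pi fun ε => continuous_pi fun x =>
    (continuous_apply (q ε x)).comp (continuous_apply ε)

lemma continuous_comp₂_left {d : ℕ} (f : Φ X d) (hf : ∀ ε, Continuous (f ε)) :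
    Continuous (fun q : Φ X d => comp₂ f q) :=
  continuous_pi fun ε => continuous_pi fun x =>
    (hf ε).comp ((continuous_apply x).comp (continuous_apply ε))

lemma isCompact_A (d : ℕ) : IsCompact (A (X := X) T d) :=
  isClosed_closure.isCompact

lemma L_comp_L {d : ℕ} {f g : Φ X d} (hf : f ∈ L T d) (hg : g ∈ L T d) :
    comp₂ f g ∈ L T d := by
  obtain ⟨a₀, a, rfl⟩ := hf
  obtain ⟨b₀, b, rfl⟩ := hg
  refine ⟨a₀ + b₀, a + b, ?_⟩
  funext ε
  show P T (a₀ + dotP a ε) ∘ P T (b₀ + dotP b ε) = _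
  rw [← P_add]
  have : dotP (a + b) ε = dotP a ε + dotP b ε := by
    simp only [dotP, Pi.add_apply]
    rw [← Finset.sum_add_distrib]
    exact Finset.sum_congr rfl fun i _ => by by_cases h : ε i <;> simp [h]
  rw [this]; ring_nf

lemma L_continuous_components {d : ℕ} {f : Φ X d} (hf : f ∈ L T d) (ε : Fin d → Bool) :
    Continuous (f ε) := by
  obtain ⟨n₀, n, rfl⟩ := hf; exact continuous_P T _

lemma comp₂_mem_A {d : ℕ} {p q : Φ X d} (hp : p ∈ A T d) (hq : q ∈ A T d) :
    comp₂ p q ∈ A T d := by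
  have step1 : ∀ f ∈ L T d, ∀ r ∈ A T d, comp₂ f r ∈ A T d := by
    intro f hf r hr
    have hmaps : Set.MapsTo (fun r => comp₂ f r) (L T d) (L T d) :=
      fun g hg => L_comp_L T hf hg
    exact hmaps.closure (continuous_comp₂_left f (L_continuous_components T hf)) hr
  have hclosed : IsClosed {p : Φ X d | comp₂ p q ∈ A T d} :=
    IsClosed.preimage (continuous_comp₂_right q) isClosed_closure
  have : L T d ⊆ {p : Φ X d | comp₂ p q ∈ A T d} := fun f hf => step1 f hf q hq
  exact closure_minimal this hclosed hp

lemma A_component_mem_E {d : ℕ} {f : Φ X d} (hf : f ∈ A T d) (ε : Fin d → Bool) :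
    f ε ∈ E T := by
  have hc : Continuous (fun g : Φ X d => g ε) := continuous_apply ε
  have hL : Set.MapsTo (fun g : Φ X d => g ε) (L T d)
      (Set.range fun n : ℤ => P T n) := by
    rintro g ⟨n₀, n, rfl⟩; exact ⟨n₀ + dotP n ε, rfl⟩
  exact hL.closure hc hf

/-- Distality forces idempotents of the Ellis semigroup to be the identity. -/
lemma idempotent_eq_id
    (hdistal : ∀ x y : X, x ≠ y →
      ∃ δ > 0, ∀ n : ℤ, δ ≤ dist ((T.toEquiv ^ n) x) ((T.toEquiv ^ n) y))
    {u : X → X} (hu : u ∈ E T) (hidem : u ∘ u = u) : u = id := by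
  funext x
  by_contra hne
  have hxux : x ≠ u x := Ne.symm hne
  obtain ⟨δ, hδ, hd⟩ := hdistal x (u x) hxux
  have hne' : (𝓝 u ⊓ 𝓟 (Set.range fun n : ℤ => P T n)).NeBot :=
    ⟨mem_closure_iff_nhds_ne_bot.mp hu⟩
  set F := 𝓝 u ⊓ 𝓟 (Set.range fun n : ℤ => P T n) with hF
  have hg : Continuous (fun f : X → X => dist (f x) (f (u x))) :=
    Continuous.dist (continuous_apply x) (continuous_apply (u x))
  have ht : Tendsto (fun f : X → X => dist (f x) (f (u x))) F
      (𝓝 (dist (u x) (u (u x)))) :=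
    (hg.tendsto u).mono_left inf_le_left
  have huu : u (u x) = u x := congrFun hidem x
  rw [huu, dist_self] at ht
  have hev : ∀ᶠ f in F, δ ≤ dist (f x) (f (u x)) := by
    have : (Set.range fun n : ℤ => P T n) ∈ F :=
      mem_inf_of_right (mem_principal_self _)
    filter_upwards [this]
    rintro f ⟨n, rfl⟩
    exact hd n
  have := ge_of_tendsto ht hev
  linarith

lemma dotP_zero {d : ℕ} (ε : Fin d → Bool) : dotP (0 : Fin d → ℤ) ε = 0 := by
  simp [dotP]

lemma idΦ_mem_L (d : ℕ) : idΦ X d ∈ L T d := by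
  refine ⟨0, 0, ?_⟩
  funext ε
  rw [dotP_zero]
  show id = P T (0 + 0)
  simp [P]

/-- Ellis–Numakura: every element of `A T d` has a left inverse. -/
lemma exists_left_inverse
    (hdistal : ∀ x y : X, x ≠ y →
      ∃ δ > 0, ∀ n : ℤ, δ ≤ dist ((T.toEquiv ^ n) x) ((T.toEquiv ^ n) y))
    {d : ℕ} {q : Φ X d} (hq : q ∈ A T d) :
    ∃ r ∈ A T d, comp₂ r q = idΦ X d := by
  classical
  set S : Set (Φ X d) := (fun r => comp₂ r q) '' (A T d) with hS
  have hSsubA : S ⊆ A T d := by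
    rintro _ ⟨r, hr, rfl⟩; exact comp₂_mem_A T hr hq
  have hScompact : IsCompact S := (isCompact_A T d).image (continuous_comp₂_right q)
  have hSne : S.Nonempty := ⟨_, ⟨idΦ X d, subset_closure (idΦ_mem_L T d), rfl⟩⟩
  have hSmul : ∀ a ∈ S, ∀ b ∈ S, comp₂ a b ∈ S := by
    rintro _ ⟨r₁, hr₁, rfl⟩ _ ⟨r₂, hr₂, rfl⟩
    refine ⟨comp₂ r₁ (comp₂ q r₂), comp₂_mem_A T hr₁ (comp₂_mem_A T hq hr₂), ?_⟩
    rfl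
  letI : Semigroup ↥S :=
    { mul := fun a b => ⟨comp₂ a.1 b.1, hSmul _ a.2 _ b.2⟩
      mul_assoc := fun a b c => Subtype.ext (comp₂_assoc a.1 b.1 c.1) }
  haveI : CompactSpace ↥S := isCompact_iff_compactSpace.mp hScompact
  haveI : Nonempty ↥S := hSne.to_subtype
  have hmull : ∀ r : ↥S, Continuous (· * r) := fun r =>
    Continuous.subtype_mk ((continuous_comp₂_right r.1).comp continuous_subtype_val) _
  obtain ⟨m, hm⟩ := exists_idempotent_of_compact_t2_of_continuous_mul_left hmull
  have hmA : m.1 ∈ A T d := hSsubA m.2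
  have hmid : m.1 = idΦ X d := by
    funext ε
    have hcomp : m.1 ε ∘ m.1 ε = m.1 ε := congrFun (congrArg Subtype.val hm) ε
    exact idempotent_eq_id T hdistal (A_component_mem_E T hmA ε) hcomp
  obtain ⟨r, hr, hrq⟩ := m.2
  exact ⟨r, hr, hrq.trans hmid⟩

/-- By distality, every element of `A T d` has a two-sided inverse. -/
lemma exists_inverse
    (hdistal : ∀ x y : X, x ≠ y →
      ∃ δ > 0, ∀ n : ℤ, δ ≤ dist ((T.toEquiv ^ n) x) ((T.toEquiv ^ n) y))
    {d : ℕ} {q : Φ X d} (hq : q ∈ A T d) :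
    ∃ r ∈ A T d, comp₂ r q = idΦ X d ∧ comp₂ q r = idΦ X d := by
  obtain ⟨r, hr, hrq⟩ := exists_left_inverse T hdistal hq
  obtain ⟨r', hr', hr'r⟩ := exists_left_inverse T hdistal hr
  refine ⟨r, hr, hrq, ?_⟩
  have : comp₂ q r = comp₂ (comp₂ r' r) (comp₂ q r) := by rw [hr'r, id_comp₂]
  rw [this, comp₂_assoc, ← comp₂_assoc r q r, hrq, id_comp₂, hr'r]

lemma dotP_insertNth {d : ℕ} (j : Fin (d+1)) (n : Fin (d+1) → ℤ) (η : Fin d → Bool) :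
    dotP n (j.insertNth false η) = dotP (j.removeNth n) η := by
  unfold dotP
  rw [Fin.sum_univ_succAbove _ j]
  simp [Fin.insertNth_apply_same, Fin.insertNth_apply_succAbove, Fin.removeNth]

lemma dotP_removeNth {d : ℕ} (k : Fin (d+1)) (n : Fin d → ℤ) (ε : Fin (d+1) → Bool) :
    dotP n (k.removeNth ε) = dotP (k.insertNth 0 n) ε := by
  unfold dotP
  rw [Fin.sum_univ_succAbove _ k]
  simp [Fin.insertNth_apply_same, Fin.insertNth_apply_succAbove, Fin.removeNth]
  rfl

lemma ev_L_mem_gen {d : ℕ} (x₀ : X) {f : Φ X d} (hf : f ∈ L T d) :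
    ev x₀ f ∈ {y | ∃ (x : X) (n : Fin d → ℤ), y = fun ε => (T.toEquiv ^ dotP n ε) x} := by
  obtain ⟨n₀, n, rfl⟩ := hf
  refine ⟨P T n₀ x₀, n, ?_⟩
  funext ε
  show P T (n₀ + dotP n ε) x₀ = (T.toEquiv ^ dotP n ε) (P T n₀ x₀)
  rw [add_comm, P_add]
  rfl

lemma ev_A_subset_cubeQ {d : ℕ} (x₀ : X) : ev x₀ '' A T d ⊆ cubeQ X T d := by
  have hmaps : Set.MapsTo (ev x₀) (L T d)
      {y | ∃ (x : X) (n : Fin d → ℤ), y = fun ε => (T.toEquiv ^ dotP n ε) x} :=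
    fun f hf => ev_L_mem_gen T x₀ hf
  rintro _ ⟨f, hf, rfl⟩
  exact hmaps.closure (continuous_ev x₀) hf

/-- Minimality: every point of `X` is reached from `x₀` by an Ellis semigroup element. -/
lemma exists_E_apply (hmin : ∀ x : X, Dense (Set.range fun n : ℤ => (T.toEquiv ^ n) x))
    (x₀ x : X) : ∃ p ∈ E T, p x₀ = x := by
  have hEcompact : IsCompact (E T) := isClosed_closure.isCompact
  have hK : IsCompact ((fun f : X → X => f x₀) '' E T) :=
    hEcompact.image (continuous_apply x₀)
  have hKclosed : IsClosed ((fun f : X → X => f x₀) '' E T) := hK.isClosed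
  have hrange : Set.range (fun n : ℤ => (T.toEquiv ^ n) x₀) ⊆
      (fun f : X → X => f x₀) '' E T := by
    rintro _ ⟨n, rfl⟩
    exact ⟨P T n, subset_closure ⟨n, rfl⟩, rfl⟩
  have hx : x ∈ (fun f : X → X => f x₀) '' E T := by
    have hd := (hmin x₀).closure_eq
    have hsub : closure (Set.range fun n : ℤ => (T.toEquiv ^ n) x₀) ⊆
        (fun f : X → X => f x₀) '' E T := closure_minimal hrange hKclosed
    rw [hd] at hsub
    exact hsub (Set.mem_univ x)
  obtain ⟨p, hp, hpx⟩ := hx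
  exact ⟨p, hp, hpx⟩

lemma diag_mem_A {d : ℕ} {p : X → X} (hp : p ∈ E T) :
    (fun _ : Fin d → Bool => p) ∈ A T d := by
  have hc : Continuous (fun f : X → X => (fun _ : Fin d → Bool => f)) :=
    continuous_pi fun _ => continuous_id
  have hmaps : Set.MapsTo (fun f : X → X => (fun _ : Fin d → Bool => f))
      (Set.range fun n : ℤ => P T n) (L T d) := by
    rintro _ ⟨n₀, rfl⟩
    refine ⟨n₀, 0, ?_⟩
    funext ε
    rw [dotP_zero, add_zero]
  exact hmaps.closure hc hp

/-- Minimality: the cube set is exactly the evaluation of the Ellis cube semigroup. -/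
lemma cubeQ_subset_ev (hmin : ∀ x : X, Dense (Set.range fun n : ℤ => (T.toEquiv ^ n) x))
    {d : ℕ} (x₀ : X) : cubeQ X T d ⊆ ev x₀ '' A T d := by
  have hclosed : IsClosed (ev x₀ '' A T d) :=
    ((isCompact_A T d).image (continuous_ev x₀)).isClosed
  refine closure_minimal ?_ hclosed
  rintro _ ⟨x, n, rfl⟩
  obtain ⟨p, hp, hpx⟩ := exists_E_apply T hmin x₀ x
  have hl : (fun ε => P T (0 + dotP n ε)) ∈ L T d := ⟨0, n, rfl⟩
  refine ⟨comp₂ (fun ε => P T (0 + dotP n ε)) (fun _ => p),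
    comp₂_mem_A T (subset_closure hl) (diag_mem_A T hp), ?_⟩
  funext ε
  show P T (0 + dotP n ε) (p x₀) = (T.toEquiv ^ dotP n ε) x
  rw [zero_add, hpx]
  rfl

/-- The cube set is invariant under componentwise application of the Ellis cube semigroup. -/
lemma apply_mem_cubeQ (hmin : ∀ x : X, Dense (Set.range fun n : ℤ => (T.toEquiv ^ n) x))
    {d : ℕ} {r : Φ X d} {y : (Fin d → Bool) → X}
    (hr : r ∈ A T d) (hy : y ∈ cubeQ X T d) :
    (fun ε => r ε (y ε)) ∈ cubeQ X T d := by
  set x₀ := y (fun _ => false) with hx₀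
  clear_value x₀
  obtain ⟨s, hs, hys⟩ := cubeQ_subset_ev T hmin x₀ hy
  have heq : (fun ε => r ε (y ε)) = ev x₀ (comp₂ r s) := by
    funext ε
    rw [← hys]
    rfl
  rw [heq]
  exact ev_A_subset_cubeQ T _ ⟨comp₂ r s, comp₂_mem_A T hr hs, rfl⟩

lemma restrict_mem_A {d : ℕ} (j : Fin (d+1)) {f : Φ X (d+1)} (hf : f ∈ A T (d+1)) :
    (fun η => f (j.insertNth false η)) ∈ A T d := by
  have hc : Continuous
      (fun f : Φ X (d+1) => (fun η : Fin d → Bool => f (j.insertNth false η))) :=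
    continuous_pi fun η => continuous_apply _
  have hmaps : Set.MapsTo
      (fun f : Φ X (d+1) => (fun η : Fin d → Bool => f (j.insertNth false η)))
      (L T (d+1)) (L T d) := by
    rintro _ ⟨n₀, n, rfl⟩
    refine ⟨n₀, j.removeNth n, ?_⟩
    funext η
    show P T (n₀ + dotP n (j.insertNth false η)) = _
    rw [dotP_insertNth]
  exact hmaps.closure hc hf

lemma lift_mem_A {d : ℕ} (k : Fin (d+1)) {f : Φ X d} (hf : f ∈ A T d) :
    (fun ε => f (k.removeNth ε)) ∈ A T (d+1) := by
  have hc : Continuous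
      (fun f : Φ X d => (fun ε : Fin (d+1) → Bool => f (k.removeNth ε))) :=
    continuous_pi fun ε => continuous_apply _
  have hmaps : Set.MapsTo
      (fun f : Φ X d => (fun ε : Fin (d+1) → Bool => f (k.removeNth ε)))
      (L T d) (L T (d+1)) := by
    rintro _ ⟨n₀, n, rfl⟩
    refine ⟨n₀, k.insertNth 0 n, ?_⟩
    funext ε
    show P T (n₀ + dotP n (k.removeNth ε)) = _
    rw [dotP_removeNth]
  exact hmaps.closure hc hf

/-- The main induction: trivializing the configuration one direction at a time. -/
lemma key (hmin : ∀ x : X, Dense (Set.range fun n : ℤ => (T.toEquiv ^ n) x))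
    (hdistal : ∀ x y : X, x ≠ y →
      ∃ δ > 0, ∀ n : ℤ, δ ≤ dist ((T.toEquiv ^ n) x) ((T.toEquiv ^ n) y))
    (x₀ : X) (m : ℕ) (k : ℕ) :
    ∀ c : (Fin (m+1) → Bool) → X,
      (∀ ε, ¬ (∀ i : Fin (m+1), k ≤ i.val → ε i = true) → c ε = x₀) →
      (∀ j : Fin (m+1), j.val < k → (fun η => c (j.insertNth false η)) ∈ cubeQ X T m) →
      ∃ z, Function.update c (fun _ => true) z ∈ cubeQ X T (m+1) := by
  classical
  induction k with
  | zero =>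
    intro c h1 _
    refine ⟨x₀, ?_⟩
    have hconst : Function.update c (fun _ => true) x₀ = fun _ => x₀ := by
      funext ε
      by_cases hε : ε = (fun _ => true)
      · subst hε; rw [Function.update_self]
      · rw [Function.update_of_ne hε]
        refine h1 ε fun h => hε (funext fun i => h i (Nat.zero_le _))
    rw [hconst]
    apply subset_closure
    refine ⟨x₀, 0, ?_⟩
    funext ε
    rw [dotP_zero]
    simp
  | succ k ih =>
    intro c h1 h2
    by_cases hk : k < m + 1
    · set j : Fin (m+1) := ⟨k, hk⟩ with hj
      have hface : (fun η => c (j.insertNth false η)) ∈ cubeQ X T m :=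
        h2 j (Nat.lt_succ_self k)
      obtain ⟨q, hq, hqev⟩ := cubeQ_subset_ev T hmin x₀ hface
      obtain ⟨q', hq', hq'q, hqq'⟩ := exists_inverse T hdistal hq
      have hcancel : ∀ η y, q' η (q η y) = y := fun η y =>
        congrFun (congrFun hq'q η) y
      have hcancel' : ∀ η y, q η (q' η y) = y := fun η y =>
        congrFun (congrFun hqq' η) y
      set Q : Φ X (m+1) := fun ε => q (j.removeNth ε) with hQdef
      set Q' : Φ X (m+1) := fun ε => q' (j.removeNth ε) with hQ'def
      have hQ : Q ∈ A T (m+1) := lift_mem_A T j hq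
      have hQ' : Q' ∈ A T (m+1) := lift_mem_A T j hq'
      set c' : (Fin (m+1) → Bool) → X := fun ε => Q' ε (c ε) with hc'def
      have qApply : ∀ ε : Fin (m+1) → Bool,
          q (j.removeNth ε) x₀ = c (Function.update ε j false) := by
        intro ε
        have := congrFun hqev (j.removeNth ε)
        simpa [ev, Fin.insertNth_removeNth] using this
      -- condition (i) at level k
      have h1' : ∀ ε, ¬ (∀ i : Fin (m+1), k ≤ i.val → ε i = true) → c' ε = x₀ := by
        intro ε hP
        by_cases hP1 : ∀ i : Fin (m+1), k+1 ≤ i.val → ε i = true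
        · have hεj : ε j = false := by
            by_contra h
            apply hP
            intro i hi
            rcases Nat.lt_or_ge i.val (k+1) with h' | h'
            · have hij : i = j := by
                apply Fin.ext
                show i.val = k
                omega
              rw [hij]
              cases hb : ε j
              · exact absurd hb h
              · rfl
            · exact hP1 i h'
          have hupd : Function.update ε j false = ε := by
            funext i
            by_cases hij : i = j
            · subst hij; rw [Function.update_self, hεj]
            · rw [Function.update_of_ne hij]
          have hcεq : c ε = q (j.removeNth ε) x₀ := by rw [qApply ε, hupd]
          show q' (j.removeNth ε) (c ε) = x₀
          rw [hcεq, hcancel]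
        · have hcε : c ε = x₀ := h1 ε hP1
          have hupdP : ¬ (∀ i : Fin (m+1), k+1 ≤ i.val →
              Function.update ε j false i = true) := by
            intro h
            apply hP1
            intro i hi
            have hij : i ≠ j := by
              intro e
              have h' : k + 1 ≤ (j : ℕ) := e ▸ hi
              have hjk : (j : ℕ) = k := rfl
              omega
            have := h i hi
            rwa [Function.update_of_ne hij] at this
          have hcupd : c (Function.update ε j false) = x₀ := h1 _ hupdP
          have hqx : q (j.removeNth ε) x₀ = x₀ := by rw [qApply ε, hcupd]
          show q' (j.removeNth ε) (c ε) = x₀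
          rw [hcε]
          calc q' (j.removeNth ε) x₀
              = q' (j.removeNth ε) (q (j.removeNth ε) x₀) := by rw [hqx]
            _ = x₀ := hcancel _ _
      -- condition (ii) at level k
      have h2' : ∀ j' : Fin (m+1), j'.val < k →
          (fun η => c' (j'.insertNth false η)) ∈ cubeQ X T m := by
        intro j' hj'
        have hR : (fun η => Q' (j'.insertNth false η)) ∈ A T m := restrict_mem_A T j' hQ'
        have hface' : (fun η => c (j'.insertNth false η)) ∈ cubeQ X T m :=
          h2 j' (Nat.lt_succ_of_lt hj')
        exact apply_mem_cubeQ T hmin hR hface'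
      obtain ⟨z', hz'⟩ := ih c' h1' h2'
      refine ⟨Q (fun _ => true) z', ?_⟩
      have heq : Function.update c (fun _ => true) (Q (fun _ => true) z') =
          fun ε => Q ε (Function.update c' (fun _ => true) z' ε) := by
        funext ε
        by_cases hε : ε = (fun _ => true)
        · subst hε
          rw [Function.update_self, Function.update_self]
        · rw [Function.update_of_ne hε, Function.update_of_ne hε]
          show c ε = q (j.removeNth ε) (q' (j.removeNth ε) (c ε))
          rw [hcancel']
      rw [heq]
      exact apply_mem_cubeQ T hmin hQ hz'
    · -- k ≥ m+1 : both conditions are vacuous, apply the inductive hypothesis directly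
      apply ih c
      · intro ε h
        exact absurd (fun i hi => absurd hi (by omega)) h
      · intro j hj
        exact h2 j (Nat.lt_succ_of_lt hj)

end

end ClosingPara

/-- Closing parallelepipeds: if all the faces `{ε : j ∉ ε}` of a configuration
`(x_ε : ε ⊊ [d])` lie in `Q^[d-1]`, the configuration can be completed to a
parallelepiped in `Q^[d]` (here `d = m + 1 ≥ 1`). -/
theorem closing_parallelepipeds
    {X : Type*} [MetricSpace X] [CompactSpace X] (T : X ≃ₜ X) (m : ℕ)
    (hmin : ∀ x : X, Dense (Set.range fun n : ℤ => (T.toEquiv ^ n) x))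
    (hdistal : ∀ x y : X, x ≠ y →
      ∃ δ > 0, ∀ n : ℤ, δ ≤ dist ((T.toEquiv ^ n) x) ((T.toEquiv ^ n) y))
    (x : (Fin (m + 1) → Bool) → X)
    (hfaces : ∀ j : Fin (m + 1),
      (fun η : Fin m → Bool => x (j.insertNth false η)) ∈ cubeQ X T m) :
    ∃ z : X, Function.update x (fun _ => true) z ∈ cubeQ X T (m + 1) := by
  apply ClosingPara.key T hmin hdistal (x (fun _ => false)) m (m+1) x
  · intro ε h
    exact absurd (fun i hi => absurd hi (by omega)) h
  · intro j _
    exact hfaces j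
end
end

section
/- Let (X,T) be a minimal distal system, d ≥ 1, x,y ∈ X, and b_* ∈ X^{2^{d+1}−1} such that (x, b_*) ∈ Q^[d+1](X). Then (y, b_*) ∈ Q^[d+1](X) if and only if (y, x, x, …, x) ∈ Q^[d+1](X). -/
open Filter Topology

noncomputable section

/-- The regionally proximal relation of order `d`. -/
def RP (X : Type*) [MetricSpace X] (T : X ≃ₜ X) (d : ℕ) : Set (X × X) :=
  {p | ∀ δ > 0, ∃ (x' y' : X) (n : Fin d → ℤ),
    dist p.1 x' < δ ∧ dist p.2 y' < δ ∧
    ∀ ε : Fin d → Bool, ε ≠ vertex0 d →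
      dist ((T.toEquiv ^ dotP n ε) x') ((T.toEquiv ^ dotP n ε) y') < δ}

/-- The point of `X^{2^{d+1}}` with value `a` at the vertex `∅` and given by `b`
elsewhere. -/
def set0 {X : Type*} {d : ℕ} (a : X) (b : (Fin d → Bool) → X) : (Fin d → Bool) → X :=
  fun ε => if ε = vertex0 d then a else b ε

section Ellis
set_option linter.unusedSectionVars false
variable {Z : Type*} [MetricSpace Z] [CompactSpace Z]

lemma comp_right_cont (g : Z → Z) : Continuous fun f : Z → Z => f ∘ g :=
  continuous_pi fun z => continuous_apply (g z)

lemma comp_left_cont {f : Z → Z} (hf : Continuous f) : Continuous fun g : Z → Z => f ∘ g :=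
  continuous_pi fun z => hf.comp (continuous_apply z)

variable {S : Set (Z → Z)}

lemma closure_comp_mem (hcont : ∀ f ∈ S, Continuous f)
    (hcomp : ∀ f ∈ S, ∀ g ∈ S, f ∘ g ∈ S) :
    ∀ f ∈ closure S, ∀ g ∈ closure S, f ∘ g ∈ closure S := by
  have h1 : ∀ f ∈ S, ∀ g ∈ closure S, f ∘ g ∈ closure S := by
    intro f hf g hg
    have him : (fun g : Z → Z => f ∘ g) '' closure S ⊆ closure ((fun g : Z → Z => f ∘ g) '' S) :=
      image_closure_subset_closure_image (comp_left_cont (hcont f hf))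
    have hsub : (fun g : Z → Z => f ∘ g) '' S ⊆ S := by
      rintro _ ⟨g, hgS, rfl⟩; exact hcomp f hf g hgS
    exact closure_mono hsub (him ⟨g, hg, rfl⟩)
  intro f hf g hg
  have hcl : IsClosed {f : Z → Z | f ∘ g ∈ closure S} :=
    IsClosed.preimage (comp_right_cont g) isClosed_closure
  exact closure_minimal (fun f' hf' => h1 f' hf' g hg) hcl hf

lemma distal_closure (hdist : ∀ a b : Z, a ≠ b → ∃ δ > 0, ∀ f ∈ S, δ ≤ dist (f a) (f b)) :
    ∀ a b : Z, a ≠ b → ∃ δ > 0, ∀ f ∈ closure S, δ ≤ dist (f a) (f b) := by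
  intro a b hab
  obtain ⟨δ, hδ, h⟩ := hdist a b hab
  refine ⟨δ, hδ, ?_⟩
  have hcl : IsClosed {f : Z → Z | δ ≤ dist (f a) (f b)} :=
    isClosed_le continuous_const ((continuous_apply a).dist (continuous_apply b))
  exact fun f hf => closure_minimal (fun f' hf' => h f' hf') hcl hf

/-- In the Ellis semigroup of a distal action, every element has a two-sided inverse. -/
lemma exists_inverse (hcont : ∀ f ∈ S, Continuous f)
    (hcomp : ∀ f ∈ S, ∀ g ∈ S, f ∘ g ∈ S) (hid : id ∈ S)
    (hdist : ∀ a b : Z, a ≠ b → ∃ δ > 0, ∀ f ∈ S, δ ≤ dist (f a) (f b)) :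
    ∀ p ∈ closure S, ∃ q ∈ closure S, (∀ z, q (p z) = z) ∧ (∀ z, p (q z) = z) := by
  have hEcomp := closure_comp_mem hcont hcomp
  have hEdist := distal_closure hdist
  have hidem : ∀ u ∈ closure S, u ∘ u = u → ∀ z, u z = z := by
    intro u hu huu z
    by_contra hne
    obtain ⟨δ, hδ, h⟩ := hEdist (u z) z hne
    have hd := h u hu
    have h2 : u (u z) = u z := congrFun huu z
    rw [h2, dist_self] at hd
    linarith
  have hone : ∀ p ∈ closure S, ∃ q ∈ closure S, ∀ z, q (p z) = z := by
    intro p hp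
    set K : Set (Z → Z) := (fun f => f ∘ p) '' closure S with hK
    have hKcomp : IsCompact K := by
      have : IsCompact (closure S) := isClosed_closure.isCompact
      exact this.image (comp_right_cont p)
    have hKne : K.Nonempty := ⟨id ∘ p, ⟨id, subset_closure hid, rfl⟩⟩
    have hKmul : ∀ f ∈ K, ∀ g ∈ K, f ∘ g ∈ K := by
      rintro _ ⟨f, hf, rfl⟩ _ ⟨g, hg, rfl⟩
      exact ⟨f ∘ p ∘ g, hEcomp f hf _ (hEcomp p hp g hg), rfl⟩
    letI : Mul (Z → Z) := ⟨fun f g => f ∘ g⟩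
    letI : Semigroup (Z → Z) := { mul_assoc := fun _ _ _ => rfl }
    have hmul_left : ∀ r : Z → Z, Continuous (· * r) := fun r => comp_right_cont r
    obtain ⟨u, huK, huu⟩ :=
      exists_idempotent_in_compact_subsemigroup hmul_left K hKne hKcomp hKmul
    obtain ⟨q, hq, hqp⟩ := huK
    have huE : u ∈ closure S := by rw [← hqp]; exact hEcomp q hq p hp
    have huu' : u ∘ u = u := huu
    have := hidem u huE huu'
    rw [← hqp] at this
    exact ⟨q, hq, this⟩
  intro p hp
  obtain ⟨q, hq, hqp⟩ := hone p hp
  obtain ⟨r, hr, hrq⟩ := hone q hq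
  refine ⟨q, hq, hqp, fun z => ?_⟩
  calc p (q z) = r (q (p (q z))) := (hrq (p (q z))).symm
    _ = r (q z) := by rw [hqp (q z)]
    _ = z := hrq z

end Ellis

/-- Extraction lemma: compact image trick. -/
lemma extract_lemma {α V : Type*} [TopologicalSpace α] [TopologicalSpace V] [T2Space V]
    {e : α → V} (he : Continuous e) {A : Set α} (hA : IsCompact (closure A)) {b : V}
    (hb : b ∈ closure (e '' A)) : ∃ w ∈ closure A, e w = b := by
  have h1 : IsCompact (e '' closure A) := hA.image he
  have h2 : closure (e '' A) ⊆ e '' closure A :=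
    closure_minimal (Set.image_mono (f := e) subset_closure) h1.isClosed
  exact h2 hb

/-- Replacement property: if `(x, b_*) ∈ Q^[d+1]`, then `(y, b_*) ∈ Q^[d+1]` iff
`(y, x, …, x) ∈ Q^[d+1]`. -/
theorem cubeQ_replacement
    {X : Type*} [MetricSpace X] [CompactSpace X] (T : X ≃ₜ X) (d : ℕ) (hd : 1 ≤ d)
    (hmin : ∀ x : X, Dense (Set.range fun n : ℤ => (T.toEquiv ^ n) x))
    (hdistal : ∀ x y : X, x ≠ y →
      ∃ δ > 0, ∀ n : ℤ, δ ≤ dist ((T.toEquiv ^ n) x) ((T.toEquiv ^ n) y))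
    (x y : X) (b : (Fin (d + 1) → Bool) → X)
    (hxb : set0 x b ∈ cubeQ X T (d + 1)) :
    set0 y b ∈ cubeQ X T (d + 1) ↔
      set0 y (fun _ => x) ∈ cubeQ X T (d + 1) := by
  classical
  set Tz : ℤ → X → X := fun n z => (T.toEquiv ^ n) z with hTzdef
  have hTz_cont : ∀ n : ℤ, Continuous (Tz n) := by
    intro n
    induction n using Int.induction_on with
    | zero => simpa [hTzdef] using continuous_id'
    | succ k ih =>
        show Continuous fun z => (T.toEquiv ^ ((k : ℤ) + 1)) z
        rw [zpow_add_one]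
        simp only [Equiv.Perm.mul_apply]
        exact ih.comp T.continuous
    | pred k ih =>
        show Continuous fun z => (T.toEquiv ^ (-(k : ℤ) - 1)) z
        rw [zpow_sub_one]
        simp only [Equiv.Perm.mul_apply]
        have hsym : Continuous fun z => (T.toEquiv⁻¹) z := T.symm.continuous
        exact ih.comp hsym
  have hTz_add : ∀ (a b' : ℤ) (z : X), Tz (a + b') z = Tz a (Tz b' z) := by
    intro a b' z; simp only [hTzdef]; rw [zpow_add]; rfl
  have hTz_zero : ∀ z : X, Tz 0 z = z := by intro z; simp [hTzdef]
  -- basics on dotP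
  have dotP_add : ∀ (m m' : Fin (d + 1) → ℤ) (ε : Fin (d + 1) → Bool),
      dotP (m + m') ε = dotP m ε + dotP m' ε := by
    intro m m' ε
    unfold dotP
    rw [← Finset.sum_add_distrib]
    refine Finset.sum_congr rfl fun i _ => ?_
    by_cases h : ε i <;> simp [h]
  have dotP_v0 : ∀ m : Fin (d + 1) → ℤ, dotP m (vertex0 (d + 1)) = 0 := by
    intro m; unfold dotP vertex0; simp
  have dotP_zero : ∀ ε : Fin (d + 1) → Bool, dotP (0 : Fin (d + 1) → ℤ) ε = 0 := by
    intro ε; unfold dotP; simp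
  -- the ambient cube space
  let Y := (Fin (d + 1) → Bool) → X
  set v0 : Fin (d + 1) → Bool := vertex0 (d + 1) with hv0def
  -- the face+diagonal maps
  set Φ : ((Fin (d + 1) → ℤ) × ℤ) → Y → Y :=
    fun ml c ε => Tz (dotP ml.1 ε + ml.2) (c ε) with hΦdef
  set SY : Set (Y → Y) := Set.range Φ with hSYdef
  set SX : Set (X → X) := Set.range fun l : ℤ => Tz l with hSXdef
  -- hypotheses for the Ellis machinery on Y
  have hΦcont : ∀ ml, Continuous (Φ ml) := fun ml =>
    continuous_pi fun ε => (hTz_cont _).comp (continuous_apply ε)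
  have hΦcomp : ∀ ml ml', Φ ml ∘ Φ ml' = Φ (ml.1 + ml'.1, ml.2 + ml'.2) := by
    intro ml ml'
    funext c ε
    show Tz (dotP ml.1 ε + ml.2) (Tz (dotP ml'.1 ε + ml'.2) (c ε)) = _
    rw [← hTz_add]
    show _ = Tz (dotP (ml.1 + ml'.1) ε + (ml.2 + ml'.2)) (c ε)
    rw [dotP_add]
    ring_nf
  have hcontY : ∀ f ∈ SY, Continuous f := by rintro _ ⟨ml, rfl⟩; exact hΦcont ml
  have hcompY : ∀ f ∈ SY, ∀ g ∈ SY, f ∘ g ∈ SY := by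
    rintro _ ⟨ml, rfl⟩ _ ⟨ml', rfl⟩
    exact ⟨(ml.1 + ml'.1, ml.2 + ml'.2), (hΦcomp ml ml').symm⟩
  have hidY : id ∈ SY := by
    refine ⟨(0, 0), ?_⟩
    funext c ε
    show Tz (dotP (0 : Fin (d + 1) → ℤ) ε + 0) (c ε) = c ε
    rw [dotP_zero, add_zero, hTz_zero]
  have hdistY : ∀ a b' : Y, a ≠ b' → ∃ δ > 0, ∀ f ∈ SY, δ ≤ dist (f a) (f b') := by
    intro a b' hab
    have : ∃ ε, a ε ≠ b' ε := by
      by_contra hcon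
      push_neg at hcon
      exact hab (funext hcon)
    obtain ⟨ε, hε⟩ := this
    obtain ⟨δ, hδ, h⟩ := hdistal (a ε) (b' ε) hε
    refine ⟨δ, hδ, ?_⟩
    rintro _ ⟨ml, rfl⟩
    calc δ ≤ dist (Tz (dotP ml.1 ε + ml.2) (a ε)) (Tz (dotP ml.1 ε + ml.2) (b' ε)) :=
          h (dotP ml.1 ε + ml.2)
      _ ≤ dist (Φ ml a) (Φ ml b') := dist_le_pi_dist (Φ ml a) (Φ ml b') ε
  -- hypotheses on X
  have hcontX : ∀ f ∈ SX, Continuous f := by rintro _ ⟨l, rfl⟩; exact hTz_cont l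
  have hcompX : ∀ f ∈ SX, ∀ g ∈ SX, f ∘ g ∈ SX := by
    rintro _ ⟨l, rfl⟩ _ ⟨l', rfl⟩
    exact ⟨l + l', by funext z; exact hTz_add l l' z⟩
  have hidX : id ∈ SX := ⟨0, by funext z; exact (hTz_zero z).symm⟩
  have hdistX : ∀ a b' : X, a ≠ b' → ∃ δ > 0, ∀ f ∈ SX, δ ≤ dist (f a) (f b') := by
    intro a b' hab
    obtain ⟨δ, hδ, h⟩ := hdistal a b' hab
    exact ⟨δ, hδ, by rintro _ ⟨l, rfl⟩; exact h l⟩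
  -- the generating set of cubeQ
  set G : Set Y := {c | ∃ (x' : X) (n : Fin (d + 1) → ℤ),
    c = fun ε => (T.toEquiv ^ dotP n ε) x'} with hGdef
  have hQdef : cubeQ X T (d + 1) = closure G := rfl
  -- invariance of Q under closure SY
  have hQinv : ∀ f ∈ closure SY, ∀ c ∈ cubeQ X T (d + 1), f c ∈ cubeQ X T (d + 1) := by
    have hgen : ∀ ml, ∀ g ∈ G, Φ ml g ∈ G := by
      rintro ml _ ⟨x', n, rfl⟩
      refine ⟨Tz ml.2 x', ml.1 + n, ?_⟩
      funext ε
      show Tz (dotP ml.1 ε + ml.2) (Tz (dotP n ε) x') = Tz (dotP (ml.1 + n) ε) (Tz ml.2 x')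
      rw [← hTz_add, ← hTz_add, dotP_add]
      ring_nf
    have hstep : ∀ ml, ∀ c ∈ cubeQ X T (d + 1), Φ ml c ∈ cubeQ X T (d + 1) := by
      intro ml c hc
      rw [hQdef] at hc ⊢
      have him : Φ ml '' closure G ⊆ closure (Φ ml '' G) :=
        image_closure_subset_closure_image (hΦcont ml)
      refine closure_mono ?_ (him ⟨c, hc, rfl⟩)
      rintro _ ⟨g, hg, rfl⟩
      exact hgen ml g hg
    intro f hf c hc
    have hcl : IsClosed {f : Y → Y | f c ∈ cubeQ X T (d + 1)} := by
      rw [hQdef]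
      exact IsClosed.preimage (continuous_apply c) isClosed_closure
    refine closure_minimal ?_ hcl hf
    rintro _ ⟨ml, rfl⟩
    exact hstep ml c hc
  -- the master family pairing cube maps with their ∅-coordinate action
  set H : ((Fin (d + 1) → ℤ) × ℤ) → ((Y → Y) × (X → X)) :=
    fun ml => (Φ ml, Tz ml.2) with hHdef
  set A : Set ((Y → Y) × (X → X)) := Set.range H with hAdef
  have hAcomp : IsCompact (closure A) := isClosed_closure.isCompact
  have hfstA : ∀ w ∈ closure A, w.1 ∈ closure SY := by
    intro w hw
    have : w.1 ∈ Prod.fst '' closure A := ⟨w, hw, rfl⟩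
    have h1 : Prod.fst '' closure A ⊆ closure (Prod.fst '' A) :=
      image_closure_subset_closure_image continuous_fst
    refine closure_mono ?_ (h1 this)
    rintro _ ⟨_, ⟨ml, rfl⟩, rfl⟩
    exact ⟨ml, rfl⟩
  have hsndA : ∀ w ∈ closure A, w.2 ∈ closure SX := by
    intro w hw
    have : w.2 ∈ Prod.snd '' closure A := ⟨w, hw, rfl⟩
    have h1 : Prod.snd '' closure A ⊆ closure (Prod.snd '' A) :=
      image_closure_subset_closure_image continuous_snd
    refine closure_mono ?_ (h1 this)
    rintro _ ⟨_, ⟨ml, rfl⟩, rfl⟩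
    exact ⟨ml.2, rfl⟩
  -- relation: the ∅-coordinate of w.1 c is w.2 (c v0)
  have hRel1 : ∀ w ∈ closure A, ∀ c : Y, (w.1 c) v0 = w.2 (c v0) := by
    intro w hw c
    have hcl : IsClosed {w : (Y → Y) × (X → X) | (w.1 c) v0 = w.2 (c v0)} := by
      refine isClosed_eq ?_ ?_
      · exact (continuous_apply v0).comp ((continuous_apply c).comp continuous_fst)
      · exact (continuous_apply (c v0)).comp continuous_snd
    refine closure_minimal ?_ hcl hw
    rintro _ ⟨ml, rfl⟩
    show Φ ml c v0 = Tz ml.2 (c v0)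
    show Tz (dotP ml.1 v0 + ml.2) (c v0) = Tz ml.2 (c v0)
    rw [hv0def, dotP_v0, zero_add]
  -- relation: elements of closure SY act coordinatewise
  have hRel2 : ∀ f ∈ closure SY, ∀ (c c' : Y) (ε : Fin (d + 1) → Bool),
      c ε = c' ε → f c ε = f c' ε := by
    intro f hf c c' ε hcc
    have hcl : IsClosed {f : Y → Y | f c ε = f c' ε} := by
      refine isClosed_eq ?_ ?_
      · exact (continuous_apply ε).comp (continuous_apply c)
      · exact (continuous_apply ε).comp (continuous_apply c')
    refine closure_minimal ?_ hcl hf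
    rintro _ ⟨ml, rfl⟩
    show Tz (dotP ml.1 ε + ml.2) (c ε) = Tz (dotP ml.1 ε + ml.2) (c' ε)
    rw [hcc]
  -- Step 1: (x,b) is in the closure of the orbit of the constant cube at x
  have hstep1 : set0 x b ∈ closure ((fun w : (Y → Y) × (X → X) => w.1 (fun _ => x)) '' A) := by
    set e : (Y → Y) × (X → X) → Y := fun w => w.1 (fun _ => x) with hedef
    have hGsub : G ⊆ closure (e '' A) := by
      rintro _ ⟨x', n, rfl⟩
      set ψ : X → Y := fun z ε => Tz (dotP n ε) z with hψdef
      have hψcont : Continuous ψ := continuous_pi fun ε => hTz_cont _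
      have hx' : x' ∈ closure (Set.range fun l : ℤ => Tz l x) := hmin x x'
      have h1 : ψ '' closure (Set.range fun l : ℤ => Tz l x) ⊆
          closure (ψ '' Set.range fun l : ℤ => Tz l x) :=
        image_closure_subset_closure_image hψcont
      have h2 : (ψ '' Set.range fun l : ℤ => Tz l x) ⊆ e '' A := by
        rintro _ ⟨_, ⟨l, rfl⟩, rfl⟩
        refine ⟨H (n, l), ⟨(n, l), rfl⟩, ?_⟩
        funext ε
        show Tz (dotP n ε + l) x = Tz (dotP n ε) (Tz l x)
        rw [hTz_add]
      have := closure_mono h2 (h1 ⟨x', hx', rfl⟩)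
      exact this
    have := closure_minimal hGsub isClosed_closure (hQdef ▸ hxb)
    exact this
  obtain ⟨w, hwA, hpx⟩ := extract_lemma
    (((continuous_apply (fun _ => x : (Fin (d + 1) → Bool) → X)).comp continuous_fst)) hAcomp hstep1
  replace hpx : w.1 (fun _ : Fin (d + 1) → Bool => x) = set0 x b := hpx
  obtain ⟨q', hq'cl, hq'p, hpq'⟩ :=
    exists_inverse hcontY hcompY hidY hdistY w.1 (hfstA w hwA)
  have hq'mem : q' ∈ closure (Prod.fst '' A) := by
    refine closure_mono ?_ hq'cl
    rintro _ ⟨ml, rfl⟩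
    exact ⟨H ml, ⟨ml, rfl⟩, rfl⟩
  obtain ⟨w2, hw2A, hw21⟩ := extract_lemma continuous_fst hAcomp hq'mem
  -- hw21 : w2.1 = q'
  -- basic facts about the ∅-coordinate actions u := w.2 and v' := w2.2
  have hux : w.2 x = x := by
    have h1 := hRel1 w hwA (fun _ => x)
    rw [hpx] at h1
    have h0 : set0 x b v0 = x := by rw [hv0def]; simp [set0]
    rw [h0] at h1
    exact h1.symm
  have hvu : ∀ z : X, w2.2 (w.2 z) = z := by
    intro z
    have h1 := hRel1 w hwA (fun _ => z)
    have h2 := hRel1 w2 hw2A (w.1 (fun _ => z))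
    rw [hw21, hq'p] at h2
    rw [h1] at h2
    exact h2.symm
  have huv : ∀ z : X, w.2 (w2.2 z) = z := by
    obtain ⟨r, hrcl, hrv, hvr⟩ :=
      exists_inverse hcontX hcompX hidX hdistX w2.2 (hsndA w2 hw2A)
    have hru : ∀ z0 : X, r z0 = w.2 z0 := by
      intro z0
      have h1 := hrv (w.2 z0)
      rw [hvu z0] at h1
      exact h1
    intro z
    have h1 := hrv z
    rw [hru (w2.2 z)] at h1
    exact h1
  have hv'x : w2.2 x = x := by
    have h1 := hvu x
    rw [hux] at h1
    exact h1
  -- diagonal lifts of elements of closure SX to closure SY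
  have hlift : ∀ g ∈ closure SX, ∃ W ∈ closure SY,
      ∀ (c : (Fin (d + 1) → Bool) → X) (ε : Fin (d + 1) → Bool), W c ε = g (c ε) := by
    intro g hg
    set K : ℤ → ((X → X) × (((Fin (d + 1) → Bool) → X) → ((Fin (d + 1) → Bool) → X))) :=
      fun l => (Tz l, Φ (0, l)) with hKdef
    have hBcomp : IsCompact (closure (Set.range K)) := isClosed_closure.isCompact
    have hgmem : g ∈ closure (Prod.fst '' Set.range K) := by
      refine closure_mono ?_ hg
      rintro _ ⟨l, rfl⟩
      exact ⟨K l, ⟨l, rfl⟩, rfl⟩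
    obtain ⟨ω, hω, hω1⟩ := extract_lemma continuous_fst hBcomp hgmem
    refine ⟨ω.2, ?_, ?_⟩
    · have h1 : Prod.snd '' closure (Set.range K) ⊆ closure (Prod.snd '' Set.range K) :=
        image_closure_subset_closure_image continuous_snd
      refine closure_mono ?_ (h1 ⟨ω, hω, rfl⟩)
      rintro _ ⟨_, ⟨l, rfl⟩, rfl⟩
      exact ⟨(0, l), rfl⟩
    · intro c ε
      have hcl : IsClosed {ω' : (X → X) ×
          (((Fin (d + 1) → Bool) → X) → ((Fin (d + 1) → Bool) → X)) |
          ω'.2 c ε = ω'.1 (c ε)} :=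
        isClosed_eq ((continuous_apply ε).comp ((continuous_apply c).comp continuous_snd))
          ((continuous_apply (c ε)).comp continuous_fst)
      have hsub : Set.range K ⊆ {ω' : (X → X) ×
          (((Fin (d + 1) → Bool) → X) → ((Fin (d + 1) → Bool) → X)) |
          ω'.2 c ε = ω'.1 (c ε)} := by
        rintro _ ⟨l, rfl⟩
        show Tz (dotP (0 : Fin (d + 1) → ℤ) ε + l) (c ε) = Tz l (c ε)
        rw [dotP_zero, zero_add]
      have h2 : ω.2 c ε = ω.1 (c ε) := closure_minimal hsub hcl hω
      rw [show ω.1 = g from hω1] at h2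
      exact h2
  obtain ⟨Wu, hWucl, hWur⟩ := hlift w.2 (hsndA w hwA)
  obtain ⟨Wv, hWvcl, hWvr⟩ := hlift w2.2 (hsndA w2 hw2A)
  -- computations with set0
  have hset0_v0 : ∀ (a : X) (c : (Fin (d + 1) → Bool) → X), set0 a c v0 = a := by
    intro a c; rw [hv0def]; simp [set0]
  have hset0_ne : ∀ (a : X) (c : (Fin (d + 1) → Bool) → X) (ε : Fin (d + 1) → Bool),
      ε ≠ v0 → set0 a c ε = c ε := by
    intro a c ε hε
    rw [hv0def] at hε
    simp [set0, hε]
  constructor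
  · -- (y, b) ∈ Q → (y, x, …, x) ∈ Q
    intro h
    have hc1Q : q' (set0 y b) ∈ cubeQ X T (d + 1) := hQinv q' hq'cl _ h
    have hc1 : q' (set0 y b) = set0 (w2.2 y) (fun _ => x) := by
      funext ε
      by_cases hε : ε = v0
      · subst hε
        have h1 := hRel1 w2 hw2A (set0 y b)
        rw [hw21] at h1
        rw [h1, hset0_v0, hset0_v0]
      · have h2 : set0 y b ε = set0 x b ε := by
          rw [hset0_ne y b ε hε, hset0_ne x b ε hε]
        have h3 := hRel2 q' hq'cl (set0 y b) (set0 x b) ε h2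
        rw [h3, ← hpx, hq'p, hset0_ne _ _ ε hε]
    rw [hc1] at hc1Q
    have hc2Q := hQinv Wu hWucl _ hc1Q
    have hc2 : Wu (set0 (w2.2 y) (fun _ => x)) = set0 y (fun _ => x) := by
      funext ε
      rw [hWur]
      by_cases hε : ε = v0
      · subst hε
        rw [hset0_v0, hset0_v0]
        exact huv y
      · rw [hset0_ne _ _ ε hε, hset0_ne _ _ ε hε]
        exact hux
    rwa [hc2] at hc2Q
  · -- (y, x, …, x) ∈ Q → (y, b) ∈ Q
    intro h
    have hb1Q := hQinv Wv hWvcl _ h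
    have hb1 : Wv (set0 y (fun _ => x)) = set0 (w2.2 y) (fun _ => x) := by
      funext ε
      rw [hWvr]
      by_cases hε : ε = v0
      · subst hε
        rw [hset0_v0, hset0_v0]
      · rw [hset0_ne _ _ ε hε, hset0_ne _ _ ε hε]
        exact hv'x
    rw [hb1] at hb1Q
    have hb2Q := hQinv w.1 (hfstA w hwA) _ hb1Q
    have hb2 : w.1 (set0 (w2.2 y) (fun _ => x)) = set0 y b := by
      funext ε
      by_cases hε : ε = v0
      · subst hε
        have h1 := hRel1 w hwA (set0 (w2.2 y) (fun _ => x))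
        rw [h1, hset0_v0, hset0_v0]
        exact huv y
      · have h2 : set0 (w2.2 y) (fun _ => x) ε = (fun _ => x : (Fin (d + 1) → Bool) → X) ε :=
          hset0_ne _ _ ε hε
        have h3 := hRel2 w.1 (hfstA w hwA) (set0 (w2.2 y) (fun _ => x))
          (fun _ => x) ε h2
        rw [h3, hpx, hset0_ne _ _ ε hε, hset0_ne _ _ ε hε]
    rwa [hb2] at hb2Q
end
end
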